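/- arXiv:2205.04184 — 4 statements merged into one kernel-verified Lean document; each statement's English description precedes it below -/
import Mathlib

section
/- Let n = 2 and s ≥ 5, suppose L = L_{2,d}(m_1,…,m_s) ≠ 0 and m_i ≥ 0 for all i. Fix 1 ≤ j_1 < j_2 ≤ s, set k := max(m_{j_1} + m_{j_2} − d, 0), d' := d − k, m'_{j_1} := m_{j_1} − k, m'_{j_2} := m_{j_2} − k, and m'_i := m_i for i ∉ {j_1, j_2}, and let L' := L_{2,d'}(m'_1,…,m'_s). Then: L' ≠ 0; m'_i ≥ 0 for all i; max(m'_{j_1} + m'_{j_2} − d', 0) = 0; max(m'_{i_1} + m'_{i_2} − d', 0) = max(m_{i_1} + m_{i_2} − d, 0) for every pair {i_1, i_2} ≠ {j_1, j_2}; k_C(d', m') = k_C(d, m); and G(d', m') = G(d, m). -/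
open Finset

noncomputable section

/-- Binomial coefficient `C(a,k)` with integer arguments; zero if `k < 0` or `a < k`. -/
def Cb (a k : ℤ) : ℤ := if 0 ≤ k ∧ k ≤ a then (Nat.choose a.toNat k.toNat : ℤ) else 0

/-- Iterated partial derivative along a list of coordinate directions, as a linear map. -/
def derivAlong {n : ℕ} (D : List (Fin (n+1))) :
    MvPolynomial (Fin (n+1)) ℂ →ₗ[ℂ] MvPolynomial (Fin (n+1)) ℂ :=
  D.foldr (fun j f => (MvPolynomial.pderiv j).toLinearMap.comp f) LinearMap.id

/-- The point `(1, u, u², …, uⁿ) ∈ ℂ^{n+1}` on the affine cone over the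
rational normal curve of degree `n`. -/
def rncPoint (n : ℕ) (u : ℂ) : Fin (n+1) → ℂ := fun j => u ^ (j : ℕ)

/-- The linear system `L_{n,d}(m_1,…,m_s)` with integer degree and multiplicities:
homogeneous polynomials of degree `d` in `x_0,…,x_n` all of whose partial derivatives
of total order `≤ m_i − 1` vanish at `p_i = (1, t_i, …, t_iⁿ)`; it is zero if `d < 0`. -/
def linSysZ (n : ℕ) (d : ℤ) (s : ℕ) (m : Fin s → ℤ) (tp : Fin s → ℂ) :
    Submodule ℂ (MvPolynomial (Fin (n+1)) ℂ) :=
  if 0 ≤ d then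
    MvPolynomial.homogeneousSubmodule (Fin (n+1)) ℂ d.toNat ⊓
      ⨅ (i : Fin s), ⨅ (D : List (Fin (n+1))), ⨅ (_ : (D.length : ℤ) < m i),
        LinearMap.ker
          ((MvPolynomial.aeval (rncPoint n (tp i))).toLinearMap.comp (derivAlong D))
  else ⊥

/-- `k_C(d,m) = ⌈(m_1+⋯+m_s − 2d)/(s−4)⌉` (planar case `n = 2`). -/
def kC2 (d : ℤ) (s : ℕ) (m : Fin s → ℤ) : ℤ :=
  ⌈((∑ i, (m i : ℚ)) - 2 * (d : ℚ)) / ((s : ℚ) - 4)⌉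

/-- The exceeding number `ε(d,m)`, i.e. the unique `ε ∈ {0,…,s−5}` with
`k_C = (Σ mᵢ − 2d + ε)/(s−4)` (planar case `n = 2`). -/
def eps2 (d : ℤ) (s : ℕ) (m : Fin s → ℤ) : ℤ :=
  ((s : ℤ) - 4) * kC2 d s m - ((∑ i, m i) - 2 * d)

/-- The function `G(d,m)` computing the dimension of planar systems with base points on
a conic. -/
def G2 (d : ℤ) (s : ℕ) (m : Fin s → ℤ) : ℤ :=
  Cb (d + 2) 2 - ∑ i, Cb (m i + 1) 2
    + ∑ p ∈ Finset.univ.filter (fun p : Fin s × Fin s => p.1 < p.2),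
        Cb (m p.1 + m p.2 - d) 2
    + Cb (kC2 d s m) 2 + ((s : ℤ) - 5) * Cb (kC2 d s m + 1) 2
    - eps2 d s m * Cb (kC2 d s m) 1

namespace StmtNine


open MvPolynomial

abbrev R3 := MvPolynomial (Fin 3) ℂ

lemma derivAlong_nil (B : R3) : derivAlong [] B = B := rfl

lemma derivAlong_cons (j : Fin 3) (D : List (Fin 3)) (B : R3) :
    derivAlong (j :: D) B = MvPolynomial.pderiv j (derivAlong D B) := rfl

lemma pderiv_comm (i j : Fin 3) (B : R3) :
    pderiv i (pderiv j B) = pderiv j (pderiv i B) := by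
  induction B using MvPolynomial.induction_on with
  | C a => simp [pderiv_C]
  | add p q hp hq => simp [map_add, hp, hq]
  | mul_X p k hp =>
      have h0 : ∀ a b : Fin 3, (pderiv a) ((Pi.single b 1 : Fin 3 → R3) k) = 0 := by
        intro a b; rw [Pi.single_apply]; split <;> simp
      simp only [pderiv_mul, map_add, pderiv_X, hp, h0]
      ring

lemma derivAlong_push (j : Fin 3) (D : List (Fin 3)) (B : R3) :
    derivAlong (j :: D) B = derivAlong D (pderiv j B) := by
  induction D generalizing B with
  | nil => rfl
  | cons i D ih =>
      rw [derivAlong_cons j (i::D), derivAlong_cons i D, pderiv_comm, ← derivAlong_cons j D,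
        ih, derivAlong_cons i D, ← ih]

/-- Translation by `p`. -/
def mshift (p : Fin 3 → ℂ) : R3 →ₐ[ℂ] R3 :=
  MvPolynomial.aeval (fun i => MvPolynomial.X i + MvPolynomial.C (p i))

lemma mshift_mshift_neg (p : Fin 3 → ℂ) (B : R3) :
    mshift p (mshift (fun i => -(p i)) B) = B := by
  induction B using MvPolynomial.induction_on with
  | C a => simp [mshift]
  | add f g hf hg => simp [map_add, hf, hg]
  | mul_X f k hf =>
      have hx : (mshift p) ((mshift fun i => -(p i)) (X k)) = X k := by
        simp [mshift, map_neg]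
      rw [map_mul, map_mul, hf, hx]

set_option linter.unusedTactic false in
lemma mshift_injective (p : Fin 3 → ℂ) : Function.Injective (mshift p) := by
  intro a b h
  have := congrArg (mshift p) (mshift_mshift_neg (fun i => -(p i)) a)
  have hb := congrArg (mshift p) (mshift_mshift_neg (fun i => -(p i)) b)
  -- simpler: left inverse
  have : ∀ B : R3, mshift (fun i => -(p i)) (mshift p B) = B := by
    intro B
    have := mshift_mshift_neg (fun i => -(p i)) B
    simpa using this
  calc a = mshift (fun i => -(p i)) (mshift p a) := (this a).symm
    _ = mshift (fun i => -(p i)) (mshift p b) := by rw [h]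
    _ = b := this b

lemma pderiv_mshift (p : Fin 3 → ℂ) (j : Fin 3) (B : R3) :
    pderiv j (mshift p B) = mshift p (pderiv j B) := by
  induction B using MvPolynomial.induction_on with
  | C a => simp [mshift]
  | add f g hf hg => simp [map_add, hf, hg]
  | mul_X f k hf =>
      have hs : (mshift p) ((Pi.single j 1 : Fin 3 → R3) k) = (Pi.single j 1 : Fin 3 → R3) k := by
        rw [Pi.single_apply]; split <;> simp
      have hx : mshift p (X k) = X k + C (p k) := by simp [mshift]
      rw [map_mul, hx, pderiv_mul, pderiv_mul, pderiv_X, map_add, pderiv_X, pderiv_C, add_zero,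
        hf, map_add, map_mul, map_mul, hx, hs]

lemma derivAlong_mshift (p : Fin 3 → ℂ) (D : List (Fin 3)) (B : R3) :
    derivAlong D (mshift p B) = mshift p (derivAlong D B) := by
  induction D with
  | nil => rfl
  | cons j D ih => rw [derivAlong_cons, ih, pderiv_mshift, derivAlong_cons]

lemma aeval_eq_aeval_zero_mshift (p : Fin 3 → ℂ) (B : R3) :
    MvPolynomial.aeval p B = MvPolynomial.aeval (fun _ => (0:ℂ)) (mshift p B) := by
  have : (MvPolynomial.aeval (fun _ => (0:ℂ))).comp (mshift p) = MvPolynomial.aeval p := by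
    apply MvPolynomial.algHom_ext
    intro i
    simp [mshift]
  rw [← this]
  rfl

lemma aeval_zero_eq_constantCoeff (B : R3) :
    MvPolynomial.aeval (fun _ => (0:ℂ)) B = constantCoeff B := by
  rw [MvPolynomial.aeval_zero']
  simp

end StmtNine
namespace StmtNine
open MvPolynomial Finsupp

lemma coeff_pderiv (j : Fin 3) (β : Fin 3 →₀ ℕ) (B : R3) :
    coeff β (pderiv j B) = (β j + 1 : ℂ) * coeff (β + Finsupp.single j 1) B := by
  induction B using MvPolynomial.induction_on' with
  | add f g hf hg => simp [map_add, coeff_add, hf, hg]; ring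
  | monomial s a =>
      rw [pderiv_monomial, coeff_monomial, coeff_monomial]
      by_cases h : s = β + Finsupp.single j 1
      · subst h
        rw [if_pos, if_pos rfl]
        · have hsj : (β + Finsupp.single j 1 : Fin 3 →₀ ℕ) j = β j + 1 := by simp
          rw [hsj]
          push_cast
          ring
        · ext i
          by_cases hij : i = j
          · subst hij; simp
          · simp [Finsupp.single_eq_of_ne (Ne.symm hij)]
      · rw [if_neg h]
        by_cases h2 : s - Finsupp.single j 1 = β
        · by_cases hsj : s j = 0
          · simp [hsj]
          · exfalso
            apply h
            rw [← h2]
            ext i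
            by_cases hij : i = j
            · subst hij
              simp only [Finsupp.add_apply, Finsupp.tsub_apply, Finsupp.single_eq_same]
              omega
            · simp [Finsupp.single_eq_of_ne' (Ne.symm hij)]
        · simp [if_neg h2]

/-- exponent Finsupp associated to a list of directions -/
def cntF (D : List (Fin 3)) : Fin 3 →₀ ℕ := Multiset.toFinsupp (↑D : Multiset (Fin 3))

lemma cntF_nil : cntF [] = 0 := by simp [cntF]

lemma cntF_cons (j : Fin 3) (D : List (Fin 3)) :
    cntF (j :: D) = cntF D + Finsupp.single j 1 := by
  ext i
  simp only [cntF, Multiset.toFinsupp_apply, Finsupp.add_apply]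
  rw [show ((j :: D : List (Fin 3)) : Multiset (Fin 3)) = j ::ₘ (D : Multiset (Fin 3)) from rfl,
    Multiset.count_cons]
  by_cases h : i = j <;> simp [h, Finsupp.single_eq_of_ne, Ne.symm]

lemma degree_single' (j : Fin 3) (n : ℕ) : Finsupp.degree (Finsupp.single j n) = n := by
  rcases eq_or_ne n 0 with h | h
  · simp [h]
  · rw [Finsupp.degree_apply, Finsupp.support_single_ne_zero _ h]
    simp

lemma degree_add' (a b : Fin 3 →₀ ℕ) :
    Finsupp.degree (a + b) = Finsupp.degree a + Finsupp.degree b := by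
  rw [Finsupp.degree_eq_weight_one, map_add]

lemma degree_cntF (D : List (Fin 3)) : Finsupp.degree (cntF D) = D.length := by
  induction D with
  | nil => simp [cntF_nil]
  | cons j D ih => rw [cntF_cons, degree_add', ih, degree_single', List.length_cons]

/-- the factorial constant -/
def cD (D : List (Fin 3)) : ℕ := ∏ i : Fin 3, Nat.factorial (cntF D i)

lemma cD_pos (D : List (Fin 3)) : 0 < cD D :=
  Finset.prod_pos fun i _ => Nat.factorial_pos _

lemma aeval_zero_derivAlong (D : List (Fin 3)) (B : R3) :
    MvPolynomial.aeval (fun _ => (0:ℂ)) (derivAlong D B) = (cD D : ℂ) * coeff (cntF D) B := by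
  induction D generalizing B with
  | nil =>
      rw [derivAlong_nil, aeval_zero_eq_constantCoeff, constantCoeff_eq]
      simp [cD, cntF_nil]
  | cons j D ih =>
      rw [derivAlong_push, ih, coeff_pderiv, cntF_cons]
      have hc : (cD (j :: D) : ℂ) = (cntF D j + 1 : ℕ) * (cD D : ℂ) := by
        rw [cD, cD]
        have : ∀ i : Fin 3, Nat.factorial (cntF (j :: D) i)
            = Nat.factorial (cntF D i) * (if i = j then cntF D j + 1 else 1) := by
          intro i
          rw [cntF_cons]
          by_cases h : i = j
          · subst h; simp [Nat.factorial_succ, mul_comm]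
          · simp [h, Finsupp.single_eq_of_ne (Ne.symm h)]
        rw [Finset.prod_congr rfl (fun i _ => this i), Finset.prod_mul_distrib,
          Finset.prod_ite_eq' Finset.univ j (fun _ => cntF D j + 1)]
        simp only [Finset.mem_univ, if_true]
        push_cast
        ring
      rw [hc]
      push_cast
      ring

/-- the coefficient-style vanishing predicate -/
def Vc (m : ℕ) (B : R3) : Prop := ∀ α : Fin 3 →₀ ℕ, Finsupp.degree α < m → coeff α B = 0

/-- the derivative-style vanishing predicate -/
def Vd (p : Fin 3 → ℂ) (m : ℕ) (P : R3) : Prop :=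
  ∀ D : List (Fin 3), D.length < m → MvPolynomial.aeval p (derivAlong D P) = 0

lemma vd_iff_vc (p : Fin 3 → ℂ) (m : ℕ) (P : R3) :
    Vd p m P ↔ Vc m (mshift p P) := by
  have key : ∀ D : List (Fin 3), MvPolynomial.aeval p (derivAlong D P)
      = (cD D : ℂ) * coeff (cntF D) (mshift p P) := by
    intro D
    rw [aeval_eq_aeval_zero_mshift p, ← derivAlong_mshift, aeval_zero_derivAlong]
  constructor
  · intro h α hα
    set D : List (Fin 3) := (Finsupp.toMultiset α).toList with hD
    have hcnt : cntF D = α := by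
      ext i
      simp [cntF, hD, Multiset.coe_toList, Finsupp.count_toMultiset]
    have hlen : D.length = Finsupp.degree α := by
      rw [← hcnt, ← degree_cntF]
    have := h D (by rw [hlen]; exact hα)
    rw [key D, hcnt] at this
    have hc : (cD D : ℂ) ≠ 0 := Nat.cast_ne_zero.mpr (cD_pos D).ne'
    exact (mul_eq_zero.mp this).resolve_left hc
  · intro h D hD
    rw [key D, h (cntF D) (by rw [degree_cntF]; exact hD), mul_zero]

end StmtNine
namespace StmtNine
open MvPolynomial Finsupp

lemma degree_le_of_mem_antidiagonal {α β γ : Fin 3 →₀ ℕ}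
    (h : (β, γ) ∈ Finset.HasAntidiagonal.antidiagonal α) :
    Finsupp.degree β + Finsupp.degree γ = Finsupp.degree α := by
  rw [Finset.HasAntidiagonal.mem_antidiagonal] at h
  rw [← h, degree_add']

lemma Vc_mul_unit {L Q : R3} (hL : constantCoeff L ≠ 0) {m : ℕ}
    (h : Vc m (L * Q)) : Vc m Q := by
  suffices H : ∀ n, ∀ α : Fin 3 →₀ ℕ, Finsupp.degree α < m → Finsupp.degree α = n → coeff α Q = 0 by
    intro α hα; exact H _ α hα rfl
  intro n
  induction n using Nat.strong_induction_on with
  | _ n ih =>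
  intro α hα hn
  have hc := h α hα
  rw [MvPolynomial.coeff_mul] at hc
  rw [Finset.sum_eq_single (0, α)] at hc
  · rw [constantCoeff_eq] at hL
    simpa using (mul_eq_zero.mp hc).resolve_left hL
  · rintro ⟨β, γ⟩ hmem hne
    have hd := degree_le_of_mem_antidiagonal hmem
    have hβ : β ≠ 0 := by
      rintro rfl
      apply hne
      rw [Finset.HasAntidiagonal.mem_antidiagonal] at hmem
      simp at hmem
      simp [hmem]
    have hβd : 0 < Finsupp.degree β := by
      rcases Nat.eq_zero_or_pos (Finsupp.degree β) with h0 | h0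
      · exact absurd ((Finsupp.degree_eq_zero_iff β).mp h0) hβ
      · exact h0
    have : coeff γ Q = 0 := by
      exact ih (Finsupp.degree γ) (by omega) γ (by omega) rfl
    rw [this, mul_zero]
  · intro hnotmem
    exfalso
    apply hnotmem
    rw [Finset.HasAntidiagonal.mem_antidiagonal, zero_add]

/-- min degree of the support -/
lemma exists_min_degree {Q : R3} (hQ : Q ≠ 0) :
    ∃ b, (∃ γ ∈ Q.support, Finsupp.degree γ = b) ∧
      ∀ γ' ∈ Q.support, b ≤ Finsupp.degree γ' := by
  have hs : (Q.support.image Finsupp.degree).Nonempty := by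
    rw [Finset.image_nonempty, MvPolynomial.support_nonempty]
    exact hQ
  refine ⟨(Q.support.image Finsupp.degree).min' hs, ?_, ?_⟩
  · have := (Q.support.image Finsupp.degree).min'_mem hs
    rw [Finset.mem_image] at this
    obtain ⟨γ, hγ, hd⟩ := this
    exact ⟨γ, hγ, hd⟩
  · intro γ' hγ'
    exact Finset.min'_le _ _ (Finset.mem_image_of_mem _ hγ')

lemma homogeneousComponent_min_ne_zero {Q : R3} {b : ℕ}
    (hmem : ∃ γ ∈ Q.support, Finsupp.degree γ = b) :
    homogeneousComponent b Q ≠ 0 := by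
  obtain ⟨γ, hγ, hd⟩ := hmem
  intro h0
  have := coeff_homogeneousComponent (n := b) (φ := Q) γ
  rw [h0, hd, if_pos rfl] at this
  rw [MvPolynomial.mem_support_iff] at hγ
  exact hγ (by simpa using this.symm)

/-- The product of the lowest homogeneous components has the right coefficients in `L*Q`. -/
lemma coeff_mul_lowest {L Q : R3} {a b : ℕ}
    (hLmin : ∀ β ∈ L.support, a ≤ Finsupp.degree β)
    (hQmin : ∀ γ ∈ Q.support, b ≤ Finsupp.degree γ)
    {δ : Fin 3 →₀ ℕ} (hδ : Finsupp.degree δ = a + b) :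
    coeff δ (L * Q) = coeff δ (homogeneousComponent a L * homogeneousComponent b Q) := by
  rw [MvPolynomial.coeff_mul, MvPolynomial.coeff_mul]
  apply Finset.sum_congr rfl
  rintro ⟨β, γ⟩ hmem
  have hd := degree_le_of_mem_antidiagonal hmem
  rw [coeff_homogeneousComponent, coeff_homogeneousComponent]
  by_cases hβ : Finsupp.degree β = a
  · have hγ : Finsupp.degree γ = b := by omega
    rw [if_pos hβ, if_pos hγ]
  · by_cases hβ2 : coeff β L = 0
    · simp [hβ2]
    · have := hLmin β (MvPolynomial.mem_support_iff.mpr hβ2)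
      have hγb : Finsupp.degree γ < b := by omega
      have : coeff γ Q = 0 := by
        by_contra hne
        exact absurd (hQmin γ (MvPolynomial.mem_support_iff.mpr hne)) (by omega)
      simp [this, if_neg hβ]

lemma Vc_mul_linear {L Q : R3} {m : ℕ}
    (hw : ∃ α₀ : Fin 3 →₀ ℕ, Finsupp.degree α₀ ≤ 1 ∧ coeff α₀ L ≠ 0)
    (h : Vc m (L * Q)) : Vc (m - 1) Q := by
  intro γ hγ
  by_contra hne
  have hQ : Q ≠ 0 := by rintro rfl; simp at hne
  have hL : L ≠ 0 := by
    rintro rfl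
    obtain ⟨α₀, _, hc⟩ := hw
    simp at hc
  obtain ⟨a, haex, hamin⟩ := exists_min_degree hL
  obtain ⟨b, hbex, hbmin⟩ := exists_min_degree hQ
  obtain ⟨α₀, hα₀d, hα₀⟩ := hw
  have ha1 : a ≤ 1 := le_trans (hamin α₀ (MvPolynomial.mem_support_iff.mpr hα₀)) hα₀d
  have hbγ : b ≤ Finsupp.degree γ := hbmin γ (MvPolynomial.mem_support_iff.mpr hne)
  -- the product of lowest components is nonzero
  have hA := homogeneousComponent_min_ne_zero haex
  have hB := homogeneousComponent_min_ne_zero hbex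
  have hprod : homogeneousComponent a L * homogeneousComponent b Q ≠ 0 := mul_ne_zero hA hB
  obtain ⟨δ, hδ⟩ := MvPolynomial.exists_coeff_ne_zero hprod
  have hδd : Finsupp.degree δ = a + b := by
    by_contra hdd
    exact hδ (((homogeneousComponent_isHomogeneous a L).mul
      (homogeneousComponent_isHomogeneous b Q)).coeff_eq_zero hdd)
  have := coeff_mul_lowest hamin hbmin hδd
  have hne2 : coeff δ (L * Q) ≠ 0 := by rw [this]; exact hδ
  have : Finsupp.degree δ < m := by omega
  exact hne2 (h δ this)

/-- multiplying a homogeneous polynomial against a homogeneous component -/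
lemma mul_homogeneousComponent {L : R3} {a : ℕ} (hL : L.IsHomogeneous a) (e : ℕ) (B : R3) :
    L * homogeneousComponent e B = homogeneousComponent (a + e) (L * B) := by
  apply MvPolynomial.ext
  intro α
  rw [MvPolynomial.coeff_mul, coeff_homogeneousComponent]
  by_cases hα : Finsupp.degree α = a + e
  · rw [if_pos hα, MvPolynomial.coeff_mul]
    apply Finset.sum_congr rfl
    rintro ⟨β, γ⟩ hmem
    have hd := degree_le_of_mem_antidiagonal hmem
    rw [coeff_homogeneousComponent]
    by_cases hγ : Finsupp.degree γ = e
    · rw [if_pos hγ]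
    · have hβ : Finsupp.degree β ≠ a := by omega
      simp [hL.coeff_eq_zero hβ, if_neg hγ]
  · rw [if_neg hα]
    apply Finset.sum_eq_zero
    rintro ⟨β, γ⟩ hmem
    have hd := degree_le_of_mem_antidiagonal hmem
    rw [coeff_homogeneousComponent]
    by_cases hγ : Finsupp.degree γ = e
    · have hβ : Finsupp.degree β ≠ a := by omega
      rw [hL.coeff_eq_zero hβ, zero_mul]
    · simp [if_neg hγ]

/-- total degree of a shift -/
lemma totalDegree_mshift_le (p : Fin 3 → ℂ) (B : R3) :
    (mshift p B).totalDegree ≤ B.totalDegree := by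
  conv_lhs => rw [B.as_sum]
  rw [map_sum]
  refine (MvPolynomial.totalDegree_finset_sum _ _).trans (Finset.sup_le ?_)
  intro α hα
  have : mshift p (monomial α (coeff α B))
      = MvPolynomial.C (coeff α B) * ∏ i ∈ α.support, (X i + MvPolynomial.C (p i)) ^ α i := by
    rw [mshift, MvPolynomial.aeval_monomial, MvPolynomial.algebraMap_eq]
    rfl
  rw [this]
  refine (MvPolynomial.totalDegree_mul _ _).trans ?_
  rw [MvPolynomial.totalDegree_C, zero_add]
  refine (MvPolynomial.totalDegree_finset_prod _ _).trans ?_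
  have hle : ∀ i ∈ α.support, ((X i + MvPolynomial.C (p i) : R3) ^ α i).totalDegree ≤ α i := by
    intro i _
    refine (MvPolynomial.totalDegree_pow _ _).trans ?_
    have : (X i + MvPolynomial.C (p i) : R3).totalDegree ≤ 1 := by
      refine (MvPolynomial.totalDegree_add _ _).trans ?_
      simp [MvPolynomial.totalDegree_X, MvPolynomial.totalDegree_C]
    calc α i * (X i + MvPolynomial.C (p i) : R3).totalDegree ≤ α i * 1 :=
          Nat.mul_le_mul_left _ this
      _ = α i := by omega
  refine (Finset.sum_le_sum hle).trans ?_
  exact MvPolynomial.le_totalDegree hα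

lemma eq_zero_of_isHomogeneous_of_vd {P : R3} {dg : ℕ} (hP : P.IsHomogeneous dg)
    (p : Fin 3 → ℂ) (h : Vd p (dg + 1) P) : P = 0 := by
  rw [vd_iff_vc] at h
  have hms : mshift p P = 0 := by
    apply MvPolynomial.ext
    intro α
    rw [MvPolynomial.coeff_zero]
    by_cases hd : Finsupp.degree α < dg + 1
    · exact h α hd
    · by_contra hne
      have hmem := MvPolynomial.mem_support_iff.mpr hne
      have h1 := MvPolynomial.le_totalDegree hmem
      have h2 := (totalDegree_mshift_le p P).trans hP.totalDegree_le
      have h3 : Finsupp.degree α = α.sum fun _ e => e := rfl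
      rw [← h3] at h1
      omega
  have : mshift p P = mshift p 0 := by rw [hms, map_zero]
  exact mshift_injective p this
end StmtNine
namespace StmtNine
open MvPolynomial Finsupp

/-- The line through the two points of the conic with parameters `t1`, `t2`. -/
def lin (t1 t2 : ℂ) : R3 :=
  C (t1*t2) * X 0 - C (t1+t2) * X 1 + X 2

def sLin (t1 t2 : ℂ) : R3 := C (t1*t2) * X 0 - C (t1+t2) * X 1

lemma lin_eq (t1 t2 : ℂ) : lin t1 t2 = sLin t1 t2 + X 2 := rfl

lemma aeval_lin (t1 t2 u : ℂ) :
    MvPolynomial.aeval (rncPoint 2 u) (lin t1 t2) = (u - t1) * (u - t2) := by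
  simp [lin, rncPoint]
  ring

lemma lin_isHomogeneous (t1 t2 : ℂ) : (lin t1 t2).IsHomogeneous 1 := by
  have h0 : (C (t1*t2) * X 0 : R3).IsHomogeneous 1 := isHomogeneous_C_mul_X _ _
  have h1 : (C (t1+t2) * X 1 : R3).IsHomogeneous 1 := isHomogeneous_C_mul_X _ _
  have h2 : (X 2 : R3).IsHomogeneous 1 := isHomogeneous_X _ _
  rw [← mem_homogeneousSubmodule] at *
  exact add_mem (sub_mem h0 h1) h2

lemma coeff_lin_X2 (t1 t2 : ℂ) : coeff (Finsupp.single 2 1) (lin t1 t2) = 1 := by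
  simp only [lin, MvPolynomial.coeff_add, MvPolynomial.coeff_sub, MvPolynomial.coeff_C_mul,
    MvPolynomial.coeff_single_X]
  norm_num [Fin.ext_iff]

lemma constantCoeff_mshift (p : Fin 3 → ℂ) (B : R3) :
    constantCoeff (mshift p B) = MvPolynomial.aeval p B := by
  rw [aeval_eq_aeval_zero_mshift p B, aeval_zero_eq_constantCoeff]

lemma mshift_lin (p : Fin 3 → ℂ) (t1 t2 : ℂ) :
    mshift p (lin t1 t2) = lin t1 t2 + C (MvPolynomial.aeval p (lin t1 t2)) := by
  simp only [lin, mshift, map_add, map_sub, map_mul, aeval_X, aeval_C,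
    MvPolynomial.algebraMap_eq, Algebra.algebraMap_self, RingHom.id_apply]
  ring

lemma coeff_mshift_lin_X2 (p : Fin 3 → ℂ) (t1 t2 : ℂ) :
    coeff (Finsupp.single 2 1) (mshift p (lin t1 t2)) = 1 := by
  rw [mshift_lin, MvPolynomial.coeff_add, coeff_lin_X2, MvPolynomial.coeff_C]
  rw [if_neg (by
    intro h
    have := DFunLike.congr_fun h (2 : Fin 3)
    simp [Finsupp.single_apply] at this)]
  ring

/-- Restriction of a polynomial along a affine line-direction `T ↦ q·T`. -/
def lcomp (q : Fin 3 → ℂ) : R3 →ₐ[ℂ] Polynomial ℂ :=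
  MvPolynomial.aeval (fun i => Polynomial.C (q i) * Polynomial.X)

lemma lcomp_monomial (q : Fin 3 → ℂ) (α : Fin 3 →₀ ℕ) (c : ℂ) :
    lcomp q (monomial α c) =
      Polynomial.C (c * α.prod fun i e => q i ^ e) * Polynomial.X ^ (Finsupp.degree α) := by
  rw [lcomp, MvPolynomial.aeval_monomial]
  rw [Finsupp.prod]
  have : ∀ i ∈ α.support, (Polynomial.C (q i) * Polynomial.X) ^ α i
      = Polynomial.C (q i ^ α i) * Polynomial.X ^ α i := by
    intro i _
    rw [mul_pow, Polynomial.C_pow]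
  rw [Finset.prod_congr rfl this, Finset.prod_mul_distrib, Finset.prod_pow_eq_pow_sum]
  rw [← map_prod]
  rw [Finsupp.degree_apply, Finsupp.prod]
  have : algebraMap ℂ (Polynomial ℂ) c = Polynomial.C c := rfl
  rw [this, ← mul_assoc, ← map_mul]

lemma lcomp_coeff_eq_zero {q : Fin 3 → ℂ} {B : R3} {j : ℕ}
    (h : ∀ α : Fin 3 →₀ ℕ, Finsupp.degree α = j → coeff α B = 0) :
    (lcomp q B).coeff j = 0 := by
  conv_lhs => rw [B.as_sum, map_sum]
  rw [Polynomial.finset_sum_coeff]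
  apply Finset.sum_eq_zero
  intro α hα
  rw [lcomp_monomial, Polynomial.coeff_C_mul, Polynomial.coeff_X_pow]
  by_cases hd : Finsupp.degree α = j
  · rw [h α hd]
    simp
  · rw [if_neg (fun hh => hd hh.symm), mul_zero]

lemma coeff_high_of_isHomogeneous {P : R3} {dg : ℕ} (hP : P.IsHomogeneous dg)
    (p : Fin 3 → ℂ) {α : Fin 3 →₀ ℕ} (hd : dg < Finsupp.degree α) :
    coeff α (mshift p P) = 0 := by
  by_contra hne
  have h1 := MvPolynomial.le_totalDegree (MvPolynomial.mem_support_iff.mpr hne)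
  have h2 := (totalDegree_mshift_le p P).trans hP.totalDegree_le
  have h3 : Finsupp.degree α = α.sum fun _ e => e := rfl
  omega

/-- Restriction to the affine line `T ↦ p + T q`. -/
def lcomp₂ (p q : Fin 3 → ℂ) : R3 →ₐ[ℂ] Polynomial ℂ :=
  MvPolynomial.aeval (fun i => Polynomial.C (p i) + Polynomial.C (q i) * Polynomial.X)

lemma lcomp₂_eq (p q : Fin 3 → ℂ) (B : R3) :
    lcomp₂ p q B = lcomp q (mshift p B) := by
  have : (lcomp q).comp (mshift p) = lcomp₂ p q := by
    apply MvPolynomial.algHom_ext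
    intro i
    simp only [lcomp, mshift, lcomp₂, AlgHom.coe_comp, Function.comp_apply,
      MvPolynomial.aeval_X, map_add, MvPolynomial.aeval_C, Polynomial.algebraMap_eq]
    ring
  rw [← this]
  rfl

lemma lcomp₂_aeval (p q : Fin 3 → ℂ) (B : R3) (T : ℂ) :
    Polynomial.aeval T (lcomp₂ p q B) = MvPolynomial.aeval (fun i => p i + q i * T) B := by
  have : (Polynomial.aeval T : Polynomial ℂ →ₐ[ℂ] ℂ).comp (lcomp₂ p q)
      = MvPolynomial.aeval (fun i => p i + q i * T) := by
    rw [lcomp₂, MvPolynomial.comp_aeval]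
    congr 1
    funext i
    simp only [map_add, map_mul, Polynomial.aeval_C, Polynomial.aeval_X,
      Algebra.algebraMap_self, RingHom.id_apply]
  calc Polynomial.aeval T (lcomp₂ p q B)
      = ((Polynomial.aeval T : Polynomial ℂ →ₐ[ℂ] ℂ).comp (lcomp₂ p q)) B := rfl
    _ = _ := by rw [this]

lemma aeval_smul_of_isHomogeneous {P : R3} {dg : ℕ} (hP : P.IsHomogeneous dg)
    (c : ℂ) (x : Fin 3 → ℂ) :
    MvPolynomial.aeval (fun i => c * x i) P = c ^ dg * MvPolynomial.aeval x P := by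
  conv_lhs => rw [P.as_sum, map_sum]
  conv_rhs => rw [P.as_sum, map_sum, Finset.mul_sum]
  apply Finset.sum_congr rfl
  intro α hα
  rw [MvPolynomial.aeval_monomial, MvPolynomial.aeval_monomial]
  have : (α.prod fun i e => (c * x i) ^ e) = c ^ (Finsupp.degree α) * α.prod fun i e => x i ^ e := by
    rw [Finsupp.prod, Finsupp.prod]
    have : ∀ i ∈ α.support, (c * x i) ^ α i = c ^ α i * x i ^ α i := fun i _ => mul_pow _ _ _
    rw [Finset.prod_congr rfl this, Finset.prod_mul_distrib, Finset.prod_pow_eq_pow_sum]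
    rfl
  rw [this]
  have hdeg : Finsupp.degree α = dg := by
    rw [Finsupp.degree_eq_weight_one]
    exact hP (MvPolynomial.mem_support_iff.mp hα)
  rw [hdeg]
  ring

end StmtNine
namespace StmtNine
open MvPolynomial Finsupp

lemma natDegree_lcomp₂_le {P : R3} {dg : ℕ} (hP : P.IsHomogeneous dg) (p q : Fin 3 → ℂ) :
    (lcomp₂ p q P).natDegree ≤ dg := by
  rw [lcomp₂_eq, Polynomial.natDegree_le_iff_coeff_eq_zero]
  intro N hN
  apply lcomp_coeff_eq_zero
  intro α hα
  exact coeff_high_of_isHomogeneous hP p (by omega)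

lemma lcomp₂_coeff_lt {P : R3} {m : ℕ} (p q : Fin 3 → ℂ) (h : Vd p m P) {j : ℕ} (hj : j < m) :
    (lcomp₂ p q P).coeff j = 0 := by
  rw [lcomp₂_eq]
  apply lcomp_coeff_eq_zero
  intro α hα
  exact ((vd_iff_vc p m P).mp h) α (by omega)

/-- The key reversal identity: restriction of a degree-`dg` form to the line from
direction `p` equals the reversal of the restriction from direction `q`. -/
lemma lcomp₂_reversal {P : R3} {dg : ℕ} (hP : P.IsHomogeneous dg) (p q : Fin 3 → ℂ)
    {j : ℕ} (hj : j ≤ dg) :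
    (lcomp₂ p q P).coeff j = (lcomp₂ q p P).coeff (dg - j) := by
  set f := lcomp₂ p q P with hf
  set g := lcomp₂ q p P with hg
  set g' : Polynomial ℂ := ∑ i ∈ Finset.range (dg + 1), Polynomial.C (g.coeff i) * Polynomial.X ^ (dg - i) with hg'
  have hfg : f = g' := by
    have hroot : ∀ T : ℂ, T ≠ 0 → (f - g').eval T = 0 := by
      intro T hT
      rw [Polynomial.eval_sub, sub_eq_zero]
      have hev : f.eval T = MvPolynomial.aeval (fun i => p i + q i * T) P := by
        rw [hf, ← lcomp₂_aeval]
        rfl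
      have hgv : g.eval T⁻¹ = MvPolynomial.aeval (fun i => q i + p i * T⁻¹) P := by
        rw [hg, ← lcomp₂_aeval]
        rfl
      have hkey : f.eval T = T ^ dg * g.eval T⁻¹ := by
        rw [hev, hgv]
        have : (fun i => p i + q i * T) = fun i => T * (q i + p i * T⁻¹) := by
          funext i
          field_simp
          ring
        rw [this, aeval_smul_of_isHomogeneous hP]
      rw [hkey]
      -- evaluate g at T⁻¹ as a sum over range (dg+1)
      have hdegg : g.natDegree < dg + 1 := Nat.lt_succ_of_le (natDegree_lcomp₂_le hP q p)
      rw [Polynomial.eval_eq_sum_range' hdegg]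
      rw [hg', Polynomial.eval_finset_sum]
      rw [Finset.mul_sum]
      apply Finset.sum_congr rfl
      intro i hi
      rw [Finset.mem_range] at hi
      rw [Polynomial.eval_mul, Polynomial.eval_pow, Polynomial.eval_C, Polynomial.eval_X]
      have : T ^ dg = T ^ (dg - i) * T ^ i := by
        rw [← pow_add]
        congr 1
        omega
      rw [this]
      field_simp
      rw [mul_comm, ← mul_assoc, ← mul_pow, one_div_mul_cancel hT, one_pow, one_mul]
    have : f - g' = 0 := by
      apply Polynomial.eq_zero_of_infinite_isRoot
      apply Set.Infinite.mono (s := {x : ℂ | x ≠ 0})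
      · intro x hx
        exact hroot x hx
      · have : ({x : ℂ | x ≠ 0}) = ({0}ᶜ : Set ℂ) := rfl
        rw [this]
        exact Set.Finite.infinite_compl (Set.finite_singleton 0)
    exact sub_eq_zero.mp this
  rw [hfg, hg', Polynomial.finset_sum_coeff]
  rw [Finset.sum_eq_single (dg - j)]
  · rw [Polynomial.coeff_C_mul, Polynomial.coeff_X_pow, if_pos (by omega), mul_one]
  · intro i hi hne
    rw [Finset.mem_range] at hi
    rw [Polynomial.coeff_C_mul, Polynomial.coeff_X_pow, if_neg (by omega), mul_zero]
  · intro hnot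
    exact absurd (Finset.mem_range.mpr (by omega)) hnot

/-- If the orders of vanishing at the two points exceed the degree, the
restriction of `P` to the line through them vanishes identically. -/
lemma lcomp₂_eq_zero {P : R3} {dg m₁ m₂ : ℕ} (hP : P.IsHomogeneous dg)
    (p q : Fin 3 → ℂ) (h1 : Vd p m₁ P) (h2 : Vd q m₂ P) (hm : dg < m₁ + m₂) :
    lcomp₂ p q P = 0 := by
  apply Polynomial.ext
  intro j
  rw [Polynomial.coeff_zero]
  by_cases hj1 : j < m₁
  · exact lcomp₂_coeff_lt p q h1 hj1
  · by_cases hj2 : j ≤ dg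
    · rw [lcomp₂_reversal hP p q hj2]
      exact lcomp₂_coeff_lt q p h2 (by omega)
    · have := natDegree_lcomp₂_le hP p q
      exact Polynomial.coeff_eq_zero_of_natDegree_lt (by omega)

end StmtNine
namespace StmtNine
open MvPolynomial Finsupp

/-- `P` vanishes on the whole plane spanned by the two points. -/
lemma vanish_on_plane {P : R3} {dg m₁ m₂ : ℕ} (hP : P.IsHomogeneous dg)
    (p q : Fin 3 → ℂ) (h1 : Vd p m₁ P) (h2 : Vd q m₂ P) (hm : dg < m₁ + m₂)
    (lam mu : ℂ) : MvPolynomial.aeval (fun i => lam * p i + mu * q i) P = 0 := by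
  have hf := lcomp₂_eq_zero hP p q h1 h2 hm
  have hg := lcomp₂_eq_zero hP q p h2 h1 (by omega)
  by_cases hlam : lam = 0
  · subst hlam
    have : (fun i => (0:ℂ) * p i + mu * q i) = fun i => mu * (q i + p i * 0) := by
      funext i; ring
    rw [this, aeval_smul_of_isHomogeneous hP, ← lcomp₂_aeval, hg, map_zero, mul_zero]
  · have : (fun i => lam * p i + mu * q i) = fun i => lam * (p i + q i * (mu / lam)) := by
      funext i
      field_simp
    rw [this, aeval_smul_of_isHomogeneous hP, ← lcomp₂_aeval, hf, map_zero, mul_zero]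

def sigA (t1 t2 : ℂ) : R3 →ₐ[ℂ] R3 :=
  MvPolynomial.aeval (fun i => if i = 2 then X 2 - sLin t1 t2 else X i)

def tauA (t1 t2 : ℂ) : R3 →ₐ[ℂ] R3 :=
  MvPolynomial.aeval (fun i => if i = 2 then X 2 + sLin t1 t2 else X i)

lemma tauA_sLin (t1 t2 : ℂ) : tauA t1 t2 (sLin t1 t2) = sLin t1 t2 := by
  simp [tauA, sLin]

lemma tauA_sigA (t1 t2 : ℂ) (B : R3) : tauA t1 t2 (sigA t1 t2 B) = B := by
  induction B using MvPolynomial.induction_on with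
  | C a => simp [sigA, tauA]
  | add f g hf hg => simp [map_add, hf, hg]
  | mul_X f k hf =>
      rw [map_mul, map_mul, hf]
      refine congrArg (f * ·) ?_
      by_cases hk : k = 2
      · subst hk
        rw [sigA]
        simp only [MvPolynomial.aeval_X, eq_self_iff_true, if_true]
        rw [map_sub, tauA_sLin, tauA]
        simp only [MvPolynomial.aeval_X, eq_self_iff_true, if_true]
        ring
      · rw [sigA]
        simp only [MvPolynomial.aeval_X, if_neg hk]
        rw [tauA]
        simp only [MvPolynomial.aeval_X, if_neg hk]

lemma tauA_X2 (t1 t2 : ℂ) : tauA t1 t2 (X 2) = lin t1 t2 := by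
  rw [tauA]
  simp only [MvPolynomial.aeval_X, eq_self_iff_true, if_true]
  rw [lin_eq]
  ring

/-- If the substitution `X 2 ↦ 0` of `B` is zero, then `X 2` divides `B`. -/
lemma X2_dvd_of_subst {B : R3}
    (h : MvPolynomial.aeval (fun i : Fin 3 => if i = 2 then (0 : R3) else X i) B = 0) :
    (X 2 : R3) ∣ B := by
  have hcoeff : ∀ α : Fin 3 →₀ ℕ, α 2 = 0 → coeff α B = 0 := by
    intro α hα2
    by_contra hne
    have hmem : α ∈ B.support := MvPolynomial.mem_support_iff.mpr hne
    have hterm : ∀ β : Fin 3 →₀ ℕ, β ∈ B.support →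
        MvPolynomial.aeval (fun i : Fin 3 => if i = 2 then (0 : R3) else X i) (monomial β (coeff β B))
        = if β 2 = 0 then monomial β (coeff β B) else 0 := by
      intro β _
      rw [MvPolynomial.aeval_monomial]
      by_cases hβ : β 2 = 0
      · rw [if_pos hβ]
        rw [MvPolynomial.monomial_eq]
        congr 1
        rw [Finsupp.prod, Finsupp.prod]
        apply Finset.prod_congr rfl
        intro i hi
        have : i ≠ 2 := by
          intro h2
          subst h2
          rw [Finsupp.mem_support_iff] at hi
          exact hi hβ
        rw [if_neg this]
      · rw [if_neg hβ]
        have h2s : (2 : Fin 3) ∈ β.support := Finsupp.mem_support_iff.mpr hβ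
        rw [Finsupp.prod, Finset.prod_eq_zero h2s]
        · rw [mul_zero]
        · rw [if_pos rfl]
          exact zero_pow hβ
    have hBsum : MvPolynomial.aeval (fun i : Fin 3 => if i = 2 then (0 : R3) else X i) B
        = ∑ β ∈ B.support, if β 2 = 0 then monomial β (coeff β B) else 0 := by
      conv_lhs => rw [B.as_sum, map_sum]
      exact Finset.sum_congr rfl hterm
    have : coeff α (∑ β ∈ B.support, if β 2 = 0 then monomial β (coeff β B) else 0) = 0 := by
      rw [← hBsum, h, MvPolynomial.coeff_zero]
    rw [MvPolynomial.coeff_sum] at this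
    simp only [apply_ite (coeff α), MvPolynomial.coeff_monomial, MvPolynomial.coeff_zero] at this
    rw [Finset.sum_eq_single α] at this
    · rw [if_pos hα2, if_pos rfl] at this
      exact hne this
    · intro β hβ hβne
      simp [hβne]
    · intro hnot
      exact absurd hmem hnot
  -- now every monomial of B contains X 2
  conv_rhs => rw [B.as_sum]
  apply Finset.dvd_sum
  intro β hβ
  have hβ2 : β 2 ≠ 0 := by
    intro h0
    rw [MvPolynomial.mem_support_iff] at hβ
    exact hβ (hcoeff β h0)
  have hβeq : Finsupp.single (2:Fin 3) 1 + (β - Finsupp.single 2 1) = β := by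
    ext i
    by_cases hi : i = 2
    · subst hi
      simp only [Finsupp.add_apply, Finsupp.tsub_apply, Finsupp.single_eq_same]
      omega
    · simp [Finsupp.single_eq_of_ne' (Ne.symm hi)]
  have : monomial β (coeff β B) = X 2 * monomial (β - Finsupp.single 2 1) (coeff β B) := by
    rw [MvPolynomial.X, MvPolynomial.monomial_mul, one_mul, hβeq]
  rw [this]
  exact Dvd.intro _ rfl

/-- The Bézout division step. -/
lemma div_step {t1 t2 : ℂ} (h12 : t1 ≠ t2) {P : R3} {dg m₁ m₂ : ℕ}
    (hP : P.IsHomogeneous dg) (h1 : Vd (rncPoint 2 t1) m₁ P) (h2 : Vd (rncPoint 2 t2) m₂ P)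
    (hm : dg < m₁ + m₂) : ∃ Q : R3, P = lin t1 t2 * Q := by
  set p := rncPoint 2 t1
  set q := rncPoint 2 t2
  have hae : ∀ (w : Fin 3 → ℂ) (B : R3), MvPolynomial.aeval w B = MvPolynomial.eval w B := by
    intro w B
    rw [MvPolynomial.aeval_def, MvPolynomial.eval, Algebra.algebraMap_self]
    rfl
  -- sigA P dies upon substituting X 2 ↦ 0
  have hsub : MvPolynomial.aeval (fun i : Fin 3 => if i = 2 then (0 : R3) else X i)
      (sigA t1 t2 P) = 0 := by
    apply MvPolynomial.funext
    intro v
    rw [map_zero, ← hae]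
    rw [MvPolynomial.comp_aeval_apply (f := fun i : Fin 3 => if i = 2 then (0 : R3) else X i)
      (MvPolynomial.aeval v)]
    rw [sigA, MvPolynomial.comp_aeval_apply
      (f := fun i : Fin 3 => if i = 2 then X 2 - sLin t1 t2 else X i)]
    set u : Fin 3 → ℂ := fun i => MvPolynomial.aeval v (if i = 2 then (0 : R3) else X i) with hu
    have hu0 : u 0 = v 0 := by simp [hu]
    have hu1 : u 1 = v 1 := by simp [hu]
    have hu2 : u 2 = 0 := by simp [hu]
    set lam : ℂ := (v 1 - t2 * v 0) / (t1 - t2) with hlam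
    set mu : ℂ := (t1 * v 0 - v 1) / (t1 - t2) with hmu
    have ht12 : t1 - t2 ≠ 0 := sub_ne_zero.mpr h12
    have hval : (fun i : Fin 3 => MvPolynomial.aeval u
          ((fun i : Fin 3 => if i = 2 then X 2 - sLin t1 t2 else X i) i))
        = fun i => lam * p i + mu * q i := by
      have hsl : MvPolynomial.aeval u (sLin t1 t2) = t1 * t2 * v 0 - (t1 + t2) * v 1 := by
        simp only [sLin, map_sub, map_mul, MvPolynomial.aeval_C, MvPolynomial.aeval_X,
          Algebra.algebraMap_self, RingHom.id_apply, map_add]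
        rw [hu0, hu1]
      funext i
      fin_cases i
      · simp only [Fin.zero_eta, Fin.isValue, Fin.reduceEq, if_false, MvPolynomial.aeval_X]
        rw [hu0]
        have hp : p 0 = 1 := by simp [p, rncPoint]
        have hq : q 0 = 1 := by simp [q, rncPoint]
        rw [hp, hq, hlam, hmu]
        field_simp
        ring
      · simp only [Fin.mk_one, Fin.isValue, Fin.reduceEq, if_false, MvPolynomial.aeval_X]
        rw [hu1]
        have hp : p 1 = t1 := by simp [p, rncPoint]
        have hq : q 1 = t2 := by simp [q, rncPoint]
        rw [hp, hq, hlam, hmu]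
        field_simp
        ring
      · show (MvPolynomial.aeval u) (if (2 : Fin 3) = 2 then X 2 - sLin t1 t2 else X (2 : Fin 3))
            = lam * p 2 + mu * q 2
        rw [if_pos rfl, map_sub, MvPolynomial.aeval_X, hu2, hsl]
        have hp : p 2 = t1 ^ 2 := by
          show t1 ^ ((2 : Fin 3) : ℕ) = t1 ^ 2
          norm_num
        have hq : q 2 = t2 ^ 2 := by
          show t2 ^ ((2 : Fin 3) : ℕ) = t2 ^ 2
          norm_num
        rw [hp, hq, hlam, hmu]
        field_simp
        ring
    rw [hval]
    exact vanish_on_plane hP p q h1 h2 hm lam mu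
  obtain ⟨B', hB'⟩ := X2_dvd_of_subst hsub
  refine ⟨tauA t1 t2 B', ?_⟩
  calc P = tauA t1 t2 (sigA t1 t2 P) := (tauA_sigA t1 t2 P).symm
    _ = tauA t1 t2 (X 2 * B') := by rw [← hB']
    _ = lin t1 t2 * tauA t1 t2 B' := by rw [map_mul, tauA_X2]

end StmtNine
namespace StmtNine
open MvPolynomial Finsupp

lemma homComp_self {P : R3} {dg : ℕ} (hP : P.IsHomogeneous dg) :
    homogeneousComponent dg P = P := by
  apply MvPolynomial.ext
  intro α
  rw [coeff_homogeneousComponent]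
  by_cases h : Finsupp.degree α = dg
  · rw [if_pos h]
  · rw [if_neg h, hP.coeff_eq_zero h]

lemma vd_of_mul_unit {t1 t2 : ℂ} {Q : R3} (pt : Fin 3 → ℂ) {k : ℕ}
    (hpt : MvPolynomial.aeval pt (lin t1 t2) ≠ 0) {m : ℕ}
    (h : Vd pt m (lin t1 t2 ^ k * Q)) : Vd pt m Q := by
  rw [vd_iff_vc] at h ⊢
  rw [map_mul] at h
  apply Vc_mul_unit _ h
  rw [map_pow, constantCoeff_eq, ← constantCoeff_eq, map_pow, constantCoeff_mshift]
  exact pow_ne_zero _ hpt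

lemma vd_of_mul_lin {t1 t2 : ℂ} {Q : R3} (pt : Fin 3 → ℂ) {m : ℕ}
    (h : Vd pt m (lin t1 t2 * Q)) : Vd pt (m - 1) Q := by
  rw [vd_iff_vc] at h ⊢
  rw [map_mul] at h
  apply Vc_mul_linear _ h
  refine ⟨Finsupp.single 2 1, ?_, ?_⟩
  · rw [degree_single']
  · rw [coeff_mshift_lin_X2]
    exact one_ne_zero

lemma aeval_zero_lin (t1 t2 : ℂ) :
    MvPolynomial.aeval (fun _ : Fin 3 => (0:ℂ)) (lin t1 t2) = 0 := by
  simp [lin]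

lemma constantCoeff_ne_zero_of_homog_zero {P : R3} (hP : P.IsHomogeneous 0) (hne : P ≠ 0) :
    constantCoeff P ≠ 0 := by
  intro h0
  apply hne
  apply MvPolynomial.ext
  intro α
  rw [MvPolynomial.coeff_zero]
  by_cases hα : Finsupp.degree α = 0
  · rw [(Finsupp.degree_eq_zero_iff α).mp hα]
    rw [constantCoeff_eq] at h0
    exact h0
  · exact hP.coeff_eq_zero hα

/-- Main descent: divide out `k` copies of the line through the points `t1`, `t2`. -/
lemma main_descent {t1 t2 : ℂ} (h12 : t1 ≠ t2) (k : ℕ) :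
    ∀ (dg m₁ m₂ : ℕ) (P : R3), P ≠ 0 → P.IsHomogeneous dg →
      Vd (rncPoint 2 t1) m₁ P → Vd (rncPoint 2 t2) m₂ P → dg + k ≤ m₁ + m₂ →
      ∃ (e : ℕ) (Q : R3), dg = e + k ∧ Q ≠ 0 ∧ Q.IsHomogeneous e ∧
        Vd (rncPoint 2 t1) (m₁ - k) Q ∧ Vd (rncPoint 2 t2) (m₂ - k) Q ∧
        P = lin t1 t2 ^ k * Q := by
  induction k with
  | zero =>
      intro dg m₁ m₂ P hne hP h1 h2 hm
      exact ⟨dg, P, rfl, hne, hP, by simpa using h1, by simpa using h2, by rw [pow_zero, one_mul]⟩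
  | succ k ih =>
      intro dg m₁ m₂ P hne hP h1 h2 hm
      obtain ⟨Q₀, hQ₀⟩ := div_step h12 hP h1 h2 (by omega)
      have hdg1 : 1 ≤ dg := by
        by_contra hd0
        have hdg0 : dg = 0 := by omega
        subst hdg0
        have := constantCoeff_ne_zero_of_homog_zero hP hne
        apply this
        rw [← aeval_zero_eq_constantCoeff, hQ₀, map_mul, aeval_zero_lin, zero_mul]
      set Q₁ : R3 := homogeneousComponent (dg - 1) Q₀ with hQ₁def
      have hPQ : P = lin t1 t2 * Q₁ := by
        rw [hQ₁def, mul_homogeneousComponent (lin_isHomogeneous t1 t2)]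
        rw [show 1 + (dg - 1) = dg by omega, ← hQ₀, homComp_self hP]
      have hQ₁ne : Q₁ ≠ 0 := by
        rintro h0
        rw [h0, mul_zero] at hPQ
        exact hne hPQ
      have hQ₁hom : Q₁.IsHomogeneous (dg - 1) := homogeneousComponent_isHomogeneous _ _
      have h1' : Vd (rncPoint 2 t1) (m₁ - 1) Q₁ := vd_of_mul_lin _ (by rwa [← hPQ])
      have h2' : Vd (rncPoint 2 t2) (m₂ - 1) Q₁ := vd_of_mul_lin _ (by rwa [← hPQ])
      obtain ⟨e, Q, he, hQne, hQhom, hv1, hv2, hfact⟩ :=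
        ih (dg - 1) (m₁ - 1) (m₂ - 1) Q₁ hQ₁ne hQ₁hom h1' h2' (by omega)
      refine ⟨e, Q, by omega, hQne, hQhom, ?_, ?_, ?_⟩
      · rw [show m₁ - (k + 1) = m₁ - 1 - k by omega]
        exact hv1
      · rw [show m₂ - (k + 1) = m₂ - 1 - k by omega]
        exact hv2
      · rw [hPQ, hfact, pow_succ]
        ring

/-- One-point bound: a nonzero form of degree `dg` vanishes to order at most `dg`. -/
lemma single_point_bound {P : R3} {dg m : ℕ} (hne : P ≠ 0) (hP : P.IsHomogeneous dg)
    (pt : Fin 3 → ℂ) (h : Vd pt m P) : m ≤ dg := by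
  by_contra hlt
  apply hne
  apply eq_zero_of_isHomogeneous_of_vd hP pt
  intro D hD
  exact h D (by omega)

/-- Four-point Bézout bound for distinct points on the conic. -/
lemma four_point_bound {ta tb tc td : ℂ}
    (hab : ta ≠ tb) (hcd : tc ≠ td)
    (hac : ta ≠ tc) (had : ta ≠ td) (hbc : tb ≠ tc) (hbd : tb ≠ td) :
    ∀ (dg : ℕ) (ma mb mc md : ℕ) (P : R3), P ≠ 0 → P.IsHomogeneous dg →
      Vd (rncPoint 2 ta) ma P → Vd (rncPoint 2 tb) mb P →
      Vd (rncPoint 2 tc) mc P → Vd (rncPoint 2 td) md P →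
      ma + mb + mc + md ≤ 2 * dg := by
  intro dg
  induction dg using Nat.strong_induction_on with
  | _ dg IH =>
  intro ma mb mc md P hne hP ha hb hc hd
  by_cases h1 : dg < ma + mb
  · obtain ⟨e, Q, he, hQne, hQhom, hva, hvb, hfact⟩ :=
      main_descent hab 1 dg ma mb P hne hP ha hb (by omega)
    have hvc : Vd (rncPoint 2 tc) mc Q := by
      apply vd_of_mul_unit (rncPoint 2 tc) (t1 := ta) (t2 := tb) (k := 1)
      · rw [aeval_lin]
        exact mul_ne_zero (sub_ne_zero.mpr (Ne.symm hac)) (sub_ne_zero.mpr (Ne.symm hbc))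
      · rwa [← hfact]
    have hvd : Vd (rncPoint 2 td) md Q := by
      apply vd_of_mul_unit (rncPoint 2 td) (t1 := ta) (t2 := tb) (k := 1)
      · rw [aeval_lin]
        exact mul_ne_zero (sub_ne_zero.mpr (Ne.symm had)) (sub_ne_zero.mpr (Ne.symm hbd))
      · rwa [← hfact]
    have := IH e (by omega) (ma - 1) (mb - 1) mc md Q hQne hQhom hva hvb hvc hvd
    omega
  · by_cases h2 : dg < mc + md
    · obtain ⟨e, Q, he, hQne, hQhom, hvc, hvd, hfact⟩ :=
        main_descent hcd 1 dg mc md P hne hP hc hd (by omega)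
      have hva : Vd (rncPoint 2 ta) ma Q := by
        apply vd_of_mul_unit (rncPoint 2 ta) (t1 := tc) (t2 := td) (k := 1)
        · rw [aeval_lin]
          exact mul_ne_zero (sub_ne_zero.mpr hac) (sub_ne_zero.mpr had)
        · rwa [← hfact]
      have hvb : Vd (rncPoint 2 tb) mb Q := by
        apply vd_of_mul_unit (rncPoint 2 tb) (t1 := tc) (t2 := td) (k := 1)
        · rw [aeval_lin]
          exact mul_ne_zero (sub_ne_zero.mpr hbc) (sub_ne_zero.mpr hbd)
        · rwa [← hfact]
      have := IH e (by omega) ma mb (mc - 1) (md - 1) Q hQne hQhom hva hvb hvc hvd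
      omega
    · omega

end StmtNine
namespace StmtNine
open MvPolynomial

lemma Cb_two_of_le_one {x : ℤ} (h : x ≤ 1) : Cb x 2 = 0 := by
  rw [Cb, if_neg]
  rintro ⟨h1, h2⟩
  omega

lemma nat_choose_two_int (n : ℕ) : 2 * (n.choose 2 : ℤ) = (n : ℤ) * ((n : ℤ) - 1) := by
  induction n with
  | zero => rfl
  | succ n ih =>
      rw [Nat.choose_succ_succ]
      push_cast
      push_cast at ih
      rw [Nat.choose_one_right]
      push_cast
      linarith [ih]

lemma two_mul_Cb_two {x : ℤ} (h : 0 ≤ x) : 2 * Cb x 2 = x * (x - 1) := by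
  by_cases h2 : 2 ≤ x
  · rw [Cb, if_pos ⟨by norm_num, h2⟩]
    have : ((2:ℤ).toNat) = 2 := rfl
    rw [this, nat_choose_two_int, Int.toNat_of_nonneg h]
  · rw [Cb_two_of_le_one (by omega)]
    have : x = 0 ∨ x = 1 := by omega
    rcases this with rfl | rfl <;> ring

lemma mem_linSysZ_iff {d : ℤ} (hd : 0 ≤ d) {s : ℕ} (m : Fin s → ℤ) (tp : Fin s → ℂ)
    (P : R3) :
    P ∈ linSysZ 2 d s m tp ↔
      P.IsHomogeneous d.toNat ∧ ∀ i, Vd (rncPoint 2 (tp i)) (m i).toNat P := by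
  rw [linSysZ, if_pos hd, Submodule.mem_inf]
  apply and_congr
  · exact MvPolynomial.mem_homogeneousSubmodule (σ := Fin 3) (R := ℂ) (n := d.toNat) (p := P)
  · simp only [Submodule.mem_iInf, LinearMap.mem_ker, LinearMap.coe_comp,
      Function.comp_apply, AlgHom.toLinearMap_apply]
    constructor
    · intro h i D hD
      exact h i D (Int.lt_toNat.mp hD)
    · intro h i D hD
      exact h i D (Int.lt_toNat.mpr hD)

end StmtNine

open StmtNine MvPolynomial

/-- **Removing a line from the base locus (Lemma 1.10).** Subtracting
`k = max(m_{j₁}+m_{j₂}−d, 0)` copies of the line through `p_{j₁}, p_{j₂}` from an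
effective planar system with nonnegative multiplicities yields an effective system
with nonnegative multiplicities, kills `k_{j₁j₂}`, preserves all other `k_{i₁i₂}⁺`
and `k_C`, and preserves `G`. -/
theorem stmt_9 (d s : ℕ) (hs : 5 ≤ s)
    (m : Fin s → ℕ) (tp : Fin s → ℂ) (htp : Function.Injective tp)
    (heff : linSysZ 2 (d : ℤ) s (fun i => (m i : ℤ)) tp ≠ ⊥)
    (j₁ j₂ : Fin s) (hj : j₁ < j₂) :
    let k : ℤ := max ((m j₁ : ℤ) + (m j₂ : ℤ) - d) 0
    let d' : ℤ := (d : ℤ) - k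
    let m' : Fin s → ℤ := fun i => (m i : ℤ) - (if i = j₁ ∨ i = j₂ then k else 0)
    (linSysZ 2 d' s m' tp ≠ ⊥) ∧
    (∀ i, 0 ≤ m' i) ∧
    (max (m' j₁ + m' j₂ - d') 0 = 0) ∧
    (∀ i₁ i₂ : Fin s, i₁ < i₂ → (i₁, i₂) ≠ (j₁, j₂) →
      max (m' i₁ + m' i₂ - d') 0 = max ((m i₁ : ℤ) + (m i₂ : ℤ) - d) 0) ∧
    (kC2 d' s m' = kC2 (d : ℤ) s (fun i => (m i : ℤ))) ∧
    (G2 d' s m' = G2 (d : ℤ) s (fun i => (m i : ℤ))) := by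
  intro k d' m'
  have hkdef : k = max ((m j₁ : ℤ) + (m j₂ : ℤ) - d) 0 := rfl
  have hd'def : d' = (d : ℤ) - k := rfl
  have hm'def : ∀ i, m' i = (m i : ℤ) - (if i = j₁ ∨ i = j₂ then k else 0) := fun _ => rfl
  have hjne : j₁ ≠ j₂ := ne_of_lt hj
  have hk1 : (m j₁ : ℤ) + (m j₂ : ℤ) - d ≤ k := le_max_left _ _
  have hk2 : (0:ℤ) ≤ k := le_max_right _ _
  have hk3 : k = (m j₁ : ℤ) + (m j₂ : ℤ) - d ∨ k = 0 := max_choice _ _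
  -- extract a nonzero element of the linear system
  obtain ⟨P, hPmem, hPne⟩ := Submodule.exists_mem_ne_zero_of_ne_bot heff
  rw [mem_linSysZ_iff (by positivity)] at hPmem
  obtain ⟨hPhom', hPvd'⟩ := hPmem
  have hdtoNat : ((d : ℤ)).toNat = d := by omega
  rw [hdtoNat] at hPhom'
  have hPhom : P.IsHomogeneous d := hPhom'
  have hVd : ∀ i, Vd (rncPoint 2 (tp i)) (m i) P := by
    intro i
    have h := hPvd' i
    rwa [show ((m i : ℤ)).toNat = m i by omega] at h
  set kN : ℕ := ((m j₁ : ℤ) + (m j₂ : ℤ) - d).toNat with hkN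
  have hkkN : k = (kN : ℤ) := by rw [hkN]; rcases hk3 with h | h <;> omega
  have hb1 : m j₁ ≤ d := single_point_bound hPne hPhom _ (hVd j₁)
  have hb2 : m j₂ ≤ d := single_point_bound hPne hPhom _ (hVd j₂)
  have htp12 : tp j₁ ≠ tp j₂ := fun h => hjne (htp h)
  -- descent
  obtain ⟨e, Q, he, hQne, hQhom, hv1, hv2, hfact⟩ : ∃ (e : ℕ) (Q : R3), d = e + kN ∧ Q ≠ 0 ∧
      Q.IsHomogeneous e ∧ Vd (rncPoint 2 (tp j₁)) (m j₁ - kN) Q ∧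
      Vd (rncPoint 2 (tp j₂)) (m j₂ - kN) Q ∧ P = lin (tp j₁) (tp j₂) ^ kN * Q := by
    rcases Nat.eq_zero_or_pos kN with h0 | hpos
    · refine ⟨d, P, by omega, hPne, hPhom, ?_, ?_, ?_⟩
      · rw [h0, Nat.sub_zero]; exact hVd j₁
      · rw [h0, Nat.sub_zero]; exact hVd j₂
      · rw [h0, pow_zero, one_mul]
    · exact main_descent htp12 kN d (m j₁) (m j₂) P hPne hPhom (hVd j₁) (hVd j₂) (by omega)
  -- four-point bound
  have hFour : ∀ i₁ i₂ : Fin s, i₁ ≠ j₁ → i₁ ≠ j₂ → i₂ ≠ j₁ → i₂ ≠ j₂ → i₁ ≠ i₂ →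
      (m i₁ : ℤ) + (m i₂ : ℤ) + (m j₁ : ℤ) + (m j₂ : ℤ) ≤ 2 * (d : ℤ) := by
    intro i₁ i₂ h1 h2 h3 h4 h5
    have hne : ∀ a b : Fin s, a ≠ b → tp a ≠ tp b := fun a b hab h => hab (htp h)
    have := four_point_bound htp12 (hne i₁ i₂ h5) (hne j₁ i₁ (Ne.symm h1)) (hne j₁ i₂ (Ne.symm h3))
      (hne j₂ i₁ (Ne.symm h2)) (hne j₂ i₂ (Ne.symm h4)) d (m j₁) (m j₂) (m i₁) (m i₂) P hPne hPhom
      (hVd j₁) (hVd j₂) (hVd i₁) (hVd i₂)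
    push_cast
    omega
  -- values of m'
  have hm'j₁ : m' j₁ = (m j₁ : ℤ) - k := by rw [hm'def, if_pos (Or.inl rfl)]
  have hm'j₂ : m' j₂ = (m j₂ : ℤ) - k := by rw [hm'def, if_pos (Or.inr rfl)]
  have hm'other : ∀ i, i ≠ j₁ → i ≠ j₂ → m' i = (m i : ℤ) := by
    intro i h1 h2
    rw [hm'def, if_neg (by tauto), sub_zero]
  -- pairwise argument equality
  have hargs : ∀ a b : Fin s, a < b → (a, b) ≠ (j₁, j₂) →
      (m' a + m' b - d' = (m a : ℤ) + (m b : ℤ) - d ∨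
        (m' a + m' b - d' ≤ 0 ∧ (m a : ℤ) + (m b : ℤ) - d ≤ 0)) := by
    intro a b hab hne
    have hab' : a ≠ b := ne_of_lt hab
    by_cases ha1 : a = j₁
    · subst ha1
      have hb2' : b ≠ j₂ := fun h => hne (by rw [h])
      have hb1' : b ≠ a := Ne.symm hab'
      left
      rw [hm'j₁, hm'other b hb1' hb2', hd'def]
      ring
    · by_cases ha2 : a = j₂
      · subst ha2
        have hb1' : b ≠ j₁ := fun h => absurd (h ▸ hab) (by omega)
        have hb2' : b ≠ a := Ne.symm hab'
        left
        rw [hm'j₂, hm'other b hb1' hb2', hd'def]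
        ring
      · by_cases hb1 : b = j₁
        · subst hb1
          left
          rw [hm'j₁, hm'other a ha1 ha2, hd'def]
          ring
        · by_cases hb2 : b = j₂
          · subst hb2
            left
            rw [hm'j₂, hm'other a ha1 ha2, hd'def]
            ring
          · -- disjoint pair
            have h4 := hFour a b ha1 ha2 hb1 hb2 hab'
            have hma := hm'other a ha1 ha2
            have hmb := hm'other b hb1 hb2
            rcases hk3 with hkeq | hkeq
            · right
              rw [hma, hmb, hd'def, hkeq]
              omega
            · left
              rw [hma, hmb, hd'def, hkeq]
              ring
  refine ⟨?_, ?_, ?_, ?_, ?_, ?_⟩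
  -- (1) effectivity
  · rw [Submodule.ne_bot_iff]
    refine ⟨Q, ?_, hQne⟩
    have hd'0 : 0 ≤ d' := by rw [hd'def, hkkN]; omega
    rw [mem_linSysZ_iff hd'0]
    constructor
    · rw [show d'.toNat = e by rw [hd'def, hkkN]; omega]
      exact hQhom
    · intro i
      by_cases hi1 : i = j₁
      · subst hi1
        rw [show (m' i).toNat = m i - kN by rw [hm'j₁, hkkN]; omega]
        exact hv1
      · by_cases hi2 : i = j₂
        · subst hi2
          rw [show (m' i).toNat = m i - kN by rw [hm'j₂, hkkN]; omega]
          exact hv2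
        · rw [show (m' i).toNat = m i by rw [hm'other i hi1 hi2]; omega]
          apply vd_of_mul_unit (rncPoint 2 (tp i)) (t1 := tp j₁) (t2 := tp j₂) (k := kN)
          · rw [aeval_lin]
            exact mul_ne_zero (sub_ne_zero.mpr fun h => hi1 (htp h))
              (sub_ne_zero.mpr fun h => hi2 (htp h))
          · rw [← hfact]
            exact hVd i
  -- (2) nonnegativity
  · intro i
    by_cases hi1 : i = j₁
    · subst hi1; rw [hm'j₁]; rcases hk3 with h | h <;> omega
    · by_cases hi2 : i = j₂
      · subst hi2; rw [hm'j₂]; rcases hk3 with h | h <;> omega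
      · rw [hm'other i hi1 hi2]; positivity
  -- (3) new k vanishes
  · have hle : m' j₁ + m' j₂ - d' ≤ 0 := by
      rw [hm'j₁, hm'j₂, hd'def]
      rcases hk3 with h | h <;> omega
    exact max_eq_right hle
  -- (4) other pair invariants
  · intro i₁ i₂ hlt hne
    rcases hargs i₁ i₂ hlt hne with heq | ⟨hle1, hle2⟩
    · rw [heq]
    · rw [max_eq_right hle1, max_eq_right hle2]
  -- (5) k_C preserved
  · rw [kC2, kC2]
    congr 2
    have hstep : ∀ i : Fin s, (m' i : ℚ) = ((m i : ℤ) : ℚ) -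
        ((if i = j₁ then (k : ℚ) else 0) + (if i = j₂ then (k : ℚ) else 0)) := by
      intro i
      rw [hm'def i]
      push_cast
      by_cases h1 : i = j₁
      · rw [if_pos (Or.inl h1), if_pos h1, if_neg (h1 ▸ hjne), add_zero]
      · by_cases h2 : i = j₂
        · rw [if_pos (Or.inr h2), if_neg h1, if_pos h2, zero_add]
        · rw [if_neg (by tauto), if_neg h1, if_neg h2, add_zero]
    rw [Finset.sum_congr rfl (fun i _ => hstep i), Finset.sum_sub_distrib,
      Finset.sum_add_distrib, Finset.sum_ite_eq' Finset.univ j₁ (fun _ => (k:ℚ)),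
      Finset.sum_ite_eq' Finset.univ j₂ (fun _ => (k:ℚ))]
    simp only [Finset.mem_univ, if_true]
    rw [hd'def]
    push_cast
    ring
  -- (6) G preserved
  · -- integer sum identity
    have hstepZ : ∀ i : Fin s, m' i = (m i : ℤ) -
        ((if i = j₁ then k else 0) + (if i = j₂ then k else 0)) := by
      intro i
      rw [hm'def i]
      by_cases h1 : i = j₁
      · rw [if_pos (Or.inl h1), if_pos h1, if_neg (h1 ▸ hjne), add_zero]
      · by_cases h2 : i = j₂
        · rw [if_pos (Or.inr h2), if_neg h1, if_pos h2, zero_add]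
        · rw [if_neg (by tauto), if_neg h1, if_neg h2, add_zero]
    have hnumZ : (∑ i, m' i) = (∑ i, (m i : ℤ)) - 2 * k := by
      rw [Finset.sum_congr rfl (fun i _ => hstepZ i), Finset.sum_sub_distrib,
        Finset.sum_add_distrib, Finset.sum_ite_eq' Finset.univ j₁ (fun _ => k),
        Finset.sum_ite_eq' Finset.univ j₂ (fun _ => k)]
      simp only [Finset.mem_univ, if_true]
      ring
    have hkC : kC2 d' s m' = kC2 (d : ℤ) s (fun i => (m i : ℤ)) := by
      rw [kC2, kC2]
      congr 2
      have : (∑ i, (m' i : ℚ)) = ((∑ i, m' i : ℤ) : ℚ) := by push_cast; rfl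
      rw [this, hnumZ, hd'def]
      push_cast
      ring
    have heps : eps2 d' s m' = eps2 (d : ℤ) s (fun i => (m i : ℤ)) := by
      rw [eps2, eps2, hkC, hnumZ, hd'def]
      ring
    -- sum over single indices
    have hS : ∑ i, Cb (m' i + 1) 2 = (∑ i, Cb ((m i : ℤ) + 1) 2)
        + ((Cb ((m j₁ : ℤ) - k + 1) 2 - Cb ((m j₁ : ℤ) + 1) 2)
          + (Cb ((m j₂ : ℤ) - k + 1) 2 - Cb ((m j₂ : ℤ) + 1) 2)) := by
      have hstep : ∀ i : Fin s, Cb (m' i + 1) 2 = Cb ((m i : ℤ) + 1) 2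
          + ((if i = j₁ then Cb ((m j₁ : ℤ) - k + 1) 2 - Cb ((m j₁ : ℤ) + 1) 2 else 0)
            + (if i = j₂ then Cb ((m j₂ : ℤ) - k + 1) 2 - Cb ((m j₂ : ℤ) + 1) 2 else 0)) := by
        intro i
        by_cases h1 : i = j₁
        · subst h1
          rw [if_pos rfl, if_neg hjne, hm'j₁]
          ring
        · by_cases h2 : i = j₂
          · subst h2
            rw [if_neg h1, if_pos rfl, hm'j₂]
            ring
          · rw [if_neg h1, if_neg h2, hm'other i h1 h2]
            ring
      rw [Finset.sum_congr rfl (fun i _ => hstep i), Finset.sum_add_distrib,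
        Finset.sum_add_distrib,
        Finset.sum_ite_eq' Finset.univ j₁
          (fun _ => Cb ((m j₁ : ℤ) - k + 1) 2 - Cb ((m j₁ : ℤ) + 1) 2),
        Finset.sum_ite_eq' Finset.univ j₂
          (fun _ => Cb ((m j₂ : ℤ) - k + 1) 2 - Cb ((m j₂ : ℤ) + 1) 2)]
      simp only [Finset.mem_univ, if_true]
    -- pair sum
    have hj12mem : ((j₁, j₂) : Fin s × Fin s)
        ∈ Finset.univ.filter (fun p : Fin s × Fin s => p.1 < p.2) := by
      simp [hj]
    have hT : ∑ p ∈ Finset.univ.filter (fun p : Fin s × Fin s => p.1 < p.2),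
          Cb (m' p.1 + m' p.2 - d') 2
        = (∑ p ∈ Finset.univ.filter (fun p : Fin s × Fin s => p.1 < p.2),
            Cb ((m p.1 : ℤ) + (m p.2 : ℤ) - d) 2) - Cb ((m j₁ : ℤ) + (m j₂ : ℤ) - d) 2 := by
      rw [← Finset.add_sum_erase _ (fun p : Fin s × Fin s => Cb (m' p.1 + m' p.2 - d') 2) hj12mem,
        ← Finset.add_sum_erase _
          (fun p : Fin s × Fin s => Cb ((m p.1 : ℤ) + (m p.2 : ℤ) - d) 2) hj12mem]
      have hz : Cb (m' j₁ + m' j₂ - d') 2 = 0 := by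
        apply Cb_two_of_le_one
        rw [hm'j₁, hm'j₂, hd'def]
        rcases hk3 with h | h <;> omega
      have hcong : ∑ p ∈ (Finset.univ.filter (fun p : Fin s × Fin s => p.1 < p.2)).erase (j₁, j₂),
            Cb (m' p.1 + m' p.2 - d') 2
          = ∑ p ∈ (Finset.univ.filter (fun p : Fin s × Fin s => p.1 < p.2)).erase (j₁, j₂),
            Cb ((m p.1 : ℤ) + (m p.2 : ℤ) - d) 2 := by
        apply Finset.sum_congr rfl
        intro p hp
        have hpne : p ≠ (j₁, j₂) := Finset.ne_of_mem_erase hp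
        have hplt : p.1 < p.2 := by
          have := Finset.mem_of_mem_erase hp
          simpa using this
        rcases hargs p.1 p.2 hplt (by simpa using hpne) with heq | ⟨hle1, hle2⟩
        · rw [heq]
        · rw [Cb_two_of_le_one (by omega), Cb_two_of_le_one (by omega)]
      rw [hz, hcong]
      ring
    -- head identity
    have hkd : k ≤ (d : ℤ) := by rw [hkkN]; omega
    have hkm1 : k ≤ (m j₁ : ℤ) := by rcases hk3 with h | h <;> omega
    have hkm2 : k ≤ (m j₂ : ℤ) := by rcases hk3 with h | h <;> omega
    have hhead : Cb (d' + 2) 2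
        = Cb ((d : ℤ) + 2) 2
          + ((Cb ((m j₁ : ℤ) - k + 1) 2 - Cb ((m j₁ : ℤ) + 1) 2)
            + (Cb ((m j₂ : ℤ) - k + 1) 2 - Cb ((m j₂ : ℤ) + 1) 2))
          + Cb ((m j₁ : ℤ) + (m j₂ : ℤ) - d) 2 := by
      rcases eq_or_lt_of_le hk2 with hk0' | hkpos
      · rw [hd'def, ← hk0', sub_zero]
        have h1 : Cb ((m j₁ : ℤ) - 0 + 1) 2 = Cb ((m j₁ : ℤ) + 1) 2 := by norm_num
        have h2 : Cb ((m j₂ : ℤ) - 0 + 1) 2 = Cb ((m j₂ : ℤ) + 1) 2 := by norm_num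
        have h3 : Cb ((m j₁ : ℤ) + (m j₂ : ℤ) - d) 2 = 0 := by
          apply Cb_two_of_le_one
          omega
        rw [h1, h2, h3]
        ring
      · have hkval : k = (m j₁ : ℤ) + (m j₂ : ℤ) - d := by
          rcases hk3 with h | h
          · exact h
          · omega
        have e1 := two_mul_Cb_two (show (0:ℤ) ≤ d' + 2 by rw [hd'def]; omega)
        have e2 := two_mul_Cb_two (show (0:ℤ) ≤ (d : ℤ) + 2 by positivity)
        have e3 := two_mul_Cb_two (show (0:ℤ) ≤ (m j₁ : ℤ) - k + 1 by omega)
        have e4 := two_mul_Cb_two (show (0:ℤ) ≤ (m j₁ : ℤ) + 1 by positivity)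
        have e5 := two_mul_Cb_two (show (0:ℤ) ≤ (m j₂ : ℤ) - k + 1 by omega)
        have e6 := two_mul_Cb_two (show (0:ℤ) ≤ (m j₂ : ℤ) + 1 by positivity)
        have e7 := two_mul_Cb_two (show (0:ℤ) ≤ (m j₁ : ℤ) + (m j₂ : ℤ) - d by omega)
        have key : 2 * Cb (d' + 2) 2
            = 2 * (Cb ((d : ℤ) + 2) 2
              + ((Cb ((m j₁ : ℤ) - k + 1) 2 - Cb ((m j₁ : ℤ) + 1) 2)
                + (Cb ((m j₂ : ℤ) - k + 1) 2 - Cb ((m j₂ : ℤ) + 1) 2))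
              + Cb ((m j₁ : ℤ) + (m j₂ : ℤ) - d) 2) := by
          rw [mul_add, mul_add, mul_add, mul_sub, mul_sub, e1, e2, e3, e4, e5, e6, e7,
            hd'def, hkval]
          ring
        omega
    rw [G2, G2, hkC, heps, hS, hT, hhead]
    ring

end
end

section
/- For every t, a, s, n ∈ ℕ with s ≥ n+3, one has F_t(a, s, s−n−3, n) = C(a,n) + Σ_{i=1}^{t} C(s−n−4+i, i)·C(a,n). -/
open Finset

noncomputable section

/-- The recursively defined function `F_t(a, s, ε, n)`. -/
def Fb : ℕ → ℤ → ℕ → ℕ → ℤ → ℤ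
  | 0, a, _, _, n => Cb a n
  | (t+1), a, s, e, n =>
      if n < 0 then 0 else
      Cb a n
        + ∑ j ∈ Finset.range (t+1), Cb ((s : ℤ) - n - 4 + (j+1)) (j+1) * Cb (a + (j+1)) n
        - ∑ j ∈ Finset.range (t+1), Cb (e : ℤ) (j+1) * Fb (t - j) a s e (n - (j+1))
  termination_by t _ _ _ _ => t
  decreasing_by omega


open Polynomial

def Yp : Polynomial ℤ := 1 + X

def Qp (e k u : ℕ) : Polynomial ℤ :=
  ∑ r ∈ range (u+1), C (((e+(u-r)).choose (u-r) * (k-1+r).choose r : ℕ) : ℤ) * Yp^r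

def Qm (e k u : ℕ) : Polynomial ℤ :=
  ∑ r ∈ range (u+1), C (((e+(u-r)-1).choose (u-r) * (k-1+r).choose r : ℕ) : ℤ) * Yp^r

def Lp (e k t : ℕ) : Polynomial ℤ :=
  ∑ i ∈ range (t+1), C ((e.choose i : ℕ) : ℤ) * X^i * Qp e (k+i) (t-i)

def Mp (e k t : ℕ) : Polynomial ℤ :=
  ∑ i ∈ range (t+1), C ((e.choose i : ℕ) : ℤ) * X^i * Qm e (k+i) (t-i)

def Rp (c t : ℕ) : Polynomial ℤ :=
  ∑ r ∈ range (t+1), C (((c-1+r).choose r : ℕ) : ℤ) * Yp^r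

lemma q0 (e k : ℕ) : Qp e k 0 = 1 := by simp [Qp]
lemma qm0 (e k : ℕ) : Qm e k 0 = 1 := by simp [Qm]

lemma q1 (e k u : ℕ) : Qp e k (u+1) = Qm e k (u+1) + Qp e k u := by
  rw [Qp, Qm, sum_range_succ, sum_range_succ _ (u+1)]
  have h1 : ∀ r ∈ range (u+1),
      C (((e+(u+1-r)).choose (u+1-r) * (k-1+r).choose r : ℕ) : ℤ) * Yp^r
      = C (((e+(u+1-r)-1).choose (u+1-r) * (k-1+r).choose r : ℕ) : ℤ) * Yp^r
        + C (((e+(u-r)).choose (u-r) * (k-1+r).choose r : ℕ) : ℤ) * Yp^r := by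
    intro r hr
    have hru : r ≤ u := by simpa [Nat.lt_succ_iff] using hr
    have h2 : u + 1 - r = (u - r) + 1 := by omega
    have h3 : e + ((u-r)+1) - 1 = e + (u - r) := by omega
    rw [h2, h3, show e + ((u-r)+1) = (e + (u-r)) + 1 from rfl,
      Nat.choose_succ_succ, Nat.add_mul, Nat.cast_add, map_add, add_mul, Nat.succ_eq_add_one]
    ring
  rw [sum_congr rfl h1, sum_add_distrib]
  have h4 : (e + (u+1-(u+1)) - 1).choose (u+1-(u+1)) = (e + (u+1-(u+1))).choose (u+1-(u+1)) := by
    rw [show u+1-(u+1) = 0 from by omega, Nat.choose_zero_right, Nat.choose_zero_right]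
  rw [h4, Qp]
  ring

lemma qp_succ' (e k u : ℕ) : Qp e k (u+1) = C (((e+u+1).choose (u+1) : ℕ) : ℤ)
    + ∑ r ∈ range (u+1), C (((e+(u-r)).choose (u-r) * (k-1+(r+1)).choose (r+1) : ℕ) : ℤ) * Yp^(r+1) := by
  rw [Qp, sum_range_succ']
  have h1 : ∀ r ∈ range (u+1),
      C (((e+(u+1-(r+1))).choose (u+1-(r+1)) * (k-1+(r+1)).choose (r+1) : ℕ) : ℤ) * Yp^(r+1)
      = C (((e+(u-r)).choose (u-r) * (k-1+(r+1)).choose (r+1) : ℕ) : ℤ) * Yp^(r+1) := by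
    intro r _
    rw [show u+1-(r+1) = u-r from by omega]
  rw [sum_congr rfl h1]
  have h2 : C (((e+(u+1-0)).choose (u+1-0) * (k-1+0).choose 0 : ℕ) : ℤ) * Yp^0
      = C (((e+u+1).choose (u+1) : ℕ) : ℤ) := by
    rw [show u+1-0 = u+1 from rfl, show e+(u+1) = e+u+1 from by omega, Nat.choose_zero_right,
      Nat.mul_one, pow_zero, mul_one]
  rw [h2]
  ring

lemma q2 (e k u : ℕ) (hk : 1 ≤ k) :
    Qp e (k+1) (u+1) = Qp e k (u+1) + Yp * Qp e (k+1) u := by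
  rw [qp_succ', qp_succ', Qp, mul_sum]
  have key : ∀ r ∈ range (u+1),
      C (((e+(u-r)).choose (u-r) * ((k+1)-1+(r+1)).choose (r+1) : ℕ) : ℤ) * Yp^(r+1)
      = C (((e+(u-r)).choose (u-r) * (k-1+(r+1)).choose (r+1) : ℕ) : ℤ) * Yp^(r+1)
        + Yp * (C (((e+(u-r)).choose (u-r) * ((k+1)-1+r).choose r : ℕ) : ℤ) * Yp^r) := by
    intro r _
    rw [show (k+1)-1+(r+1) = (k+r)+1 from by omega, show k-1+(r+1) = k+r from by omega,
      show (k+1)-1+r = k+r from by omega, Nat.choose_succ_succ (k+r) r,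
      Nat.mul_add, Nat.cast_add, map_add, add_mul, pow_succ]
    ring
  rw [sum_congr rfl key, sum_add_distrib]
  ring

lemma q3 (e u : ℕ) :
    Qp e 1 (u+1) = C (((e+u+1).choose (u+1) : ℕ) : ℤ) + Yp * Qp e 1 u := by
  rw [qp_succ', Qp, mul_sum]
  have key : ∀ r ∈ range (u+1),
      C (((e+(u-r)).choose (u-r) * (1-1+(r+1)).choose (r+1) : ℕ) : ℤ) * Yp^(r+1)
      = Yp * (C (((e+(u-r)).choose (u-r) * (1-1+r).choose r : ℕ) : ℤ) * Yp^r) := by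
    intro r _
    rw [show 1-1+(r+1) = r+1 from by omega, show 1-1+r = r from by omega,
      Nat.choose_self, Nat.choose_self]
    simp only [Nat.mul_one, pow_succ]
    ring
  rw [sum_congr rfl key]

lemma qm_succ (e k u : ℕ) : Qm (e+1) k u = Qp e k u := by
  rw [Qm, Qp]
  refine sum_congr rfl fun r _ => ?_
  rw [show e+1+(u-r)-1 = e+(u-r) from by omega]

lemma lp0 (e k : ℕ) : Lp e k 0 = 1 := by simp [Lp, q0]
lemma mp0 (e k : ℕ) : Mp e k 0 = 1 := by simp [Mp, qm0]

lemma lp_succ (e k t : ℕ) : Lp e k (t+1) = Mp e k (t+1) + Lp e k t := by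
  rw [Lp, Mp, sum_range_succ, sum_range_succ _ (t+1)]
  have key : ∀ i ∈ range (t+1),
      C ((e.choose i : ℕ):ℤ) * X^i * Qp e (k+i) (t+1-i)
      = C ((e.choose i : ℕ):ℤ) * X^i * Qm e (k+i) (t+1-i)
        + C ((e.choose i : ℕ):ℤ) * X^i * Qp e (k+i) (t-i) := by
    intro i hi
    have hi' : i ≤ t := by simpa [Nat.lt_succ_iff] using hi
    rw [show t+1-i = (t-i)+1 from by omega, q1, mul_add]
  rw [sum_congr rfl key, sum_add_distrib, Lp]
  rw [show t+1-(t+1) = 0 from by omega, q0, qm0]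
  ring

lemma mp_zero (k t : ℕ) : Mp 0 k t = C (((k-1+t).choose t : ℕ):ℤ) * Yp^t := by
  rw [Mp, Finset.sum_eq_single 0]
  · rw [Nat.choose_zero_right, Nat.cast_one, map_one, one_mul, pow_zero, one_mul,
      Nat.sub_zero, Qm, Finset.sum_eq_single t]
    · rw [show t-t = 0 from Nat.sub_self t]
      norm_num
    · intro r hr hne
      have hr' : r < t := by simp only [mem_range] at hr; omega
      have : (0+(t-r)-1).choose (t-r) = 0 := Nat.choose_eq_zero_of_lt (by omega)
      rw [this, Nat.zero_mul, Nat.cast_zero, map_zero, zero_mul]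
    · intro h; exact absurd (mem_range.mpr (by omega)) h
  · intro i hi hne
    rcases i with _ | j
    · exact absurd rfl hne
    · rw [Nat.choose_zero_succ, Nat.cast_zero, map_zero, zero_mul, zero_mul]
  · intro h; exact absurd (mem_range.mpr (by omega)) h

lemma mp_succE (e k t : ℕ) : Mp (e+1) k (t+1) = Lp e k (t+1) + X * Lp e (k+1) t := by
  have hL : Mp (e+1) k (t+1)
      = (∑ i ∈ range (t+1), C ((e.choose (i+1) : ℕ):ℤ) * X^(i+1) * Qp e ((k+1)+i) (t-i))
        + (∑ i ∈ range (t+1), X * (C ((e.choose i : ℕ):ℤ) * X^i * Qp e ((k+1)+i) (t-i)))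
        + Qp e k (t+1) := by
    rw [Mp, sum_range_succ']
    have key : ∀ i ∈ range (t+1),
        C (((e+1).choose (i+1) : ℕ):ℤ) * X^(i+1) * Qm (e+1) (k+(i+1)) (t+1-(i+1))
        = C ((e.choose (i+1) : ℕ):ℤ) * X^(i+1) * Qp e ((k+1)+i) (t-i)
          + X * (C ((e.choose i : ℕ):ℤ) * X^i * Qp e ((k+1)+i) (t-i)) := by
      intro i _
      rw [qm_succ, Nat.choose_succ_succ e i, Nat.cast_add, map_add, add_mul, add_mul,
        show k+(i+1) = (k+1)+i from by omega, show t+1-(i+1) = t-i from by omega, pow_succ]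
      ring
    rw [sum_congr rfl key, sum_add_distrib]
    simp only [Nat.choose_zero_right, Nat.cast_one, map_one, one_mul, pow_zero,
      Nat.add_zero, Nat.sub_zero, qm_succ]
  have hR : Lp e k (t+1)
      = (∑ i ∈ range (t+1), C ((e.choose (i+1) : ℕ):ℤ) * X^(i+1) * Qp e ((k+1)+i) (t-i))
        + Qp e k (t+1) := by
    rw [Lp, sum_range_succ']
    have key : ∀ i ∈ range (t+1),
        C ((e.choose (i+1) : ℕ):ℤ) * X^(i+1) * Qp e (k+(i+1)) (t+1-(i+1))
        = C ((e.choose (i+1) : ℕ):ℤ) * X^(i+1) * Qp e ((k+1)+i) (t-i) := by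
      intro i _
      rw [show k+(i+1) = (k+1)+i from by omega, show t+1-(i+1) = t-i from by omega]
    rw [sum_congr rfl key]
    simp only [Nat.choose_zero_right, Nat.cast_one, map_one, one_mul, pow_zero,
      Nat.add_zero, Nat.sub_zero]
  rw [hL, hR, Lp, mul_sum]
  ring

lemma x_mul_yp_pow (r : ℕ) : X * Yp^r = Yp^(r+1) - Yp^r := by
  rw [Yp, pow_succ]; ring

lemma rp_succ (c t : ℕ) :
    Rp c (t+1) = Rp c t + C (((c-1+(t+1)).choose (t+1) : ℕ):ℤ) * Yp^(t+1) := by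
  rw [Rp, Rp, sum_range_succ]

lemma tlem (c : ℕ) (hc : 1 ≤ c) : ∀ t : ℕ,
    Rp c t + ∑ r ∈ range t, C (((c+r).choose r : ℕ):ℤ) * (Yp^(r+1) - Yp^r)
      = C (((c+t).choose t : ℕ):ℤ) * Yp^t := by
  intro t
  induction t with
  | zero => simp [Rp]
  | succ t ih =>
    rw [rp_succ, sum_range_succ, show c-1+(t+1) = c+t from by omega,
      show c+(t+1) = (c+t)+1 from by omega, Nat.choose_succ_succ (c+t) t,
      Nat.cast_add, map_add, add_mul]
    linear_combination ih

lemma lstar (e : ℕ) :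
    (∀ k t, 1 ≤ k → Mp e k t = C (((k+e-1+t).choose t : ℕ):ℤ) * Yp^t)
    ∧ (∀ k t, 1 ≤ k → Lp e k t = Rp (k+e) t) := by
  induction e with
  | zero =>
    constructor
    · intro k t hk
      rw [mp_zero, show k+0-1+t = k-1+t from by omega]
    · intro k t hk
      induction t with
      | zero => rw [lp0, Rp]; simp
      | succ t iht =>
        rw [lp_succ, iht, mp_zero, rp_succ, show (k+0)-1+(t+1) = k-1+(t+1) from by omega]
        ring
  | succ e ih =>
    have hM : ∀ k t, 1 ≤ k → Mp (e+1) k t = C (((k+(e+1)-1+t).choose t : ℕ):ℤ) * Yp^t := by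
      intro k t hk
      match t with
      | 0 => rw [mp0]; simp
      | (t+1) =>
        rw [mp_succE, ih.2 k (t+1) hk, ih.2 (k+1) t (by omega)]
        have hx : X * Rp (k+1+e) t
            = ∑ r ∈ range (t+1), C ((((k+e)+r).choose r : ℕ):ℤ) * (Yp^(r+1) - Yp^r) := by
          rw [Rp, mul_sum]
          refine sum_congr rfl fun r _ => ?_
          rw [show (k+1+e)-1+r = (k+e)+r from by omega, ← x_mul_yp_pow]
          ring
        rw [hx, show k+(e+1)-1+(t+1) = (k+e)+(t+1) from by omega]
        exact tlem (k+e) (by omega) (t+1)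
    exact ⟨hM, by
      intro k t hk
      induction t with
      | zero => rw [lp0, Rp]; simp
      | succ t iht =>
        rw [lp_succ, iht, hM k (t+1) hk, rp_succ]
        ring⟩

lemma p0 (e t : ℕ) :
    ∑ j ∈ range (t+1), C ((e.choose (j+1) : ℕ):ℤ) * X^(j+1) * Qp e (j+1) (t-j)
    = 1 + ∑ j ∈ range (t+1), C (((e+j).choose (j+1) : ℕ):ℤ) * Yp^(j+1)
      - C (((e+t+1).choose (t+1) : ℕ):ℤ) := by
  have h1 : (∑ j ∈ range (t+1), C ((e.choose (j+1) : ℕ):ℤ) * X^(j+1) * Qp e (j+1) (t-j))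
      + Yp * ∑ j ∈ range t, C ((e.choose (j+1) : ℕ):ℤ) * X^(j+1) * Qp e ((j+1)+1) (t-1-j)
      = ∑ j ∈ range (t+1), C ((e.choose (j+1) : ℕ):ℤ) * X^(j+1) * Qp e ((j+1)+1) (t-j) := by
    rw [mul_sum, sum_range_succ, sum_range_succ
      (fun j => C ((e.choose (j+1) : ℕ):ℤ) * X^(j+1) * Qp e ((j+1)+1) (t-j)) t]
    have key : ∀ j ∈ range t,
        C ((e.choose (j+1) : ℕ):ℤ) * X^(j+1) * Qp e (j+1) (t-j)
        + Yp * (C ((e.choose (j+1) : ℕ):ℤ) * X^(j+1) * Qp e ((j+1)+1) (t-1-j))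
        = C ((e.choose (j+1) : ℕ):ℤ) * X^(j+1) * Qp e ((j+1)+1) (t-j) := by
      intro j hj
      have hj' : j < t := mem_range.mp hj
      have hq := q2 e (j+1) (t-1-j) (by omega)
      rw [show t-1-j+1 = t-j from by omega] at hq
      rw [hq]; ring
    have hsum := sum_congr rfl key
    rw [sum_add_distrib] at hsum
    rw [show t-t = 0 from by omega, q0, q0]
    linear_combination hsum
  have h2 : Lp e 1 (t+1) = Qp e 1 (t+1)
      + ∑ j ∈ range (t+1), C ((e.choose (j+1) : ℕ):ℤ) * X^(j+1) * Qp e ((j+1)+1) (t-j) := by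
    rw [Lp, sum_range_succ']
    have key : ∀ i ∈ range (t+1),
        C ((e.choose (i+1) : ℕ):ℤ) * X^(i+1) * Qp e (1+(i+1)) (t+1-(i+1))
        = C ((e.choose (i+1) : ℕ):ℤ) * X^(i+1) * Qp e ((i+1)+1) (t-i) := by
      intro i _
      rw [show 1+(i+1) = (i+1)+1 from by omega, show t+1-(i+1) = t-i from by omega]
    rw [sum_congr rfl key]
    simp only [Nat.choose_zero_right, Nat.cast_one, map_one, one_mul, pow_zero,
      Nat.add_zero, Nat.sub_zero]
    ring
  have h3 : Lp e 1 t = Qp e 1 t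
      + ∑ j ∈ range t, C ((e.choose (j+1) : ℕ):ℤ) * X^(j+1) * Qp e ((j+1)+1) (t-1-j) := by
    rcases t with _ | t'
    · rw [lp0, q0]; simp
    rw [Lp, sum_range_succ']
    have key : ∀ i ∈ range (t'+1),
        C ((e.choose (i+1) : ℕ):ℤ) * X^(i+1) * Qp e (1+(i+1)) (t'+1-(i+1))
        = C ((e.choose (i+1) : ℕ):ℤ) * X^(i+1) * Qp e ((i+1)+1) (t'+1-1-i) := by
      intro i _
      rw [show 1+(i+1) = (i+1)+1 from by omega, show t'+1-(i+1) = t'+1-1-i from by omega]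
    rw [sum_congr rfl key]
    simp only [Nat.choose_zero_right, Nat.cast_one, map_one, one_mul, pow_zero,
      Nat.add_zero, Nat.sub_zero]
    ring
  have h4 := q3 e t
  have h5 : Lp e 1 (t+1) = Rp (1+e) (t+1) := (lstar e).2 1 (t+1) le_rfl
  have h6 : Lp e 1 t = Rp (1+e) t := (lstar e).2 1 t le_rfl
  have h7 : Rp (1+e) (t+1)
      = 1 + ∑ r ∈ range (t+1), C (((e+r+1).choose (r+1) : ℕ):ℤ) * Yp^(r+1) := by
    rw [Rp, sum_range_succ']
    have key : ∀ r ∈ range (t+1),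
        C (((1+e-1+(r+1)).choose (r+1) : ℕ):ℤ) * Yp^(r+1)
        = C (((e+r+1).choose (r+1) : ℕ):ℤ) * Yp^(r+1) := by
      intro r _
      rw [show 1+e-1+(r+1) = e+r+1 from by omega]
    rw [sum_congr rfl key]
    simp only [Nat.choose_zero_right, Nat.cast_one, map_one, pow_zero]
    ring
  have h8 : Yp * Rp (1+e) t = ∑ r ∈ range (t+1), C (((e+r).choose r : ℕ):ℤ) * Yp^(r+1) := by
    rw [Rp, mul_sum]
    refine sum_congr rfl fun r _ => ?_
    rw [show 1+e-1+r = e+r from by omega, pow_succ]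
    ring
  have h9 : ∀ r ∈ range (t+1),
      C (((e+r+1).choose (r+1) : ℕ):ℤ) * Yp^(r+1)
      = C (((e+r).choose (r+1) : ℕ):ℤ) * Yp^(r+1) + C (((e+r).choose r : ℕ):ℤ) * Yp^(r+1) := by
    intro r _
    rw [show e+r+1 = (e+r)+1 from rfl, Nat.choose_succ_succ, Nat.cast_add, map_add, add_mul]
    ring
  have h9s := sum_congr rfl h9
  rw [sum_add_distrib] at h9s
  linear_combination h1 - h2 + Yp * h3 - h4 + h5 - Yp * h6 + h7 - h8 + h9s

lemma cb_neg (x m : ℤ) (h : m < 0) : Cb x m = 0 := by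
  rw [Cb, if_neg (by omega : ¬(0 ≤ m ∧ m ≤ x))]

lemma cb_nat (p q : ℕ) : Cb (p:ℤ) (q:ℤ) = (p.choose q : ℤ) := by
  rw [Cb]
  split_ifs with h
  · simp
  · have hq : p < q := by omega
    simp [Nat.choose_eq_zero_of_lt hq]

lemma coeffY (b d : ℕ) : (Yp^b).coeff d = (b.choose d : ℤ) := by
  rw [Yp, add_comm 1 (X : Polynomial ℤ), Polynomial.coeff_X_add_one_pow]

lemma cbCoeff (b c : ℕ) (m : ℤ) (hm : 0 ≤ m) :
    Cb (b:ℤ) (m - c) = (X^c * Yp^b).coeff m.toNat := by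
  rw [mul_comm, Polynomial.coeff_mul_X_pow']
  split_ifs with h
  · rw [coeffY]
    have h0 : (0:ℤ) ≤ m - c := by omega
    by_cases h2 : m - c ≤ (b:ℤ)
    · have e1 : ((b:ℤ)).toNat = b := by omega
      have e2 : (m - (c:ℤ)).toNat = m.toNat - c := by omega
      rw [Cb, if_pos ⟨h0, h2⟩, e1, e2]
    · rw [Cb, if_neg (by omega : ¬(0 ≤ m - (c:ℤ) ∧ m - c ≤ (b:ℤ))),
        Nat.choose_eq_zero_of_lt (by omega : b < m.toNat - c), Nat.cast_zero]
  · rw [cb_neg _ _ (by omega)]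

lemma cast_ar (a r : ℕ) : ((a+r : ℕ) : ℤ) = (a:ℤ) + r := by push_cast; ring

lemma cbCoeff0 (b : ℕ) (m : ℤ) (hm : 0 ≤ m) : Cb (b:ℤ) m = (Yp^b).coeff m.toNat := by
  have h := cbCoeff b 0 m hm
  simpa using h

lemma knum (t e k a : ℕ) (m : ℤ) (hk : 1 ≤ k) :
    ∑ j ∈ range (t+1), ((e.choose j : ℕ) : ℤ) *
      ∑ r ∈ range (t-j+1), (((e+(t-j-r)).choose (t-j-r) * (k+j-1+r).choose r : ℕ) : ℤ) *
        Cb ((a:ℤ)+r) (m-j)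
    = ∑ r ∈ range (t+1), (((k+e-1+r).choose r : ℕ) : ℤ) * Cb ((a:ℤ)+r) m := by
  rcases lt_or_ge m 0 with hm | hm
  · rw [sum_eq_zero, sum_eq_zero]
    · intro r _
      rw [cb_neg _ _ (by omega), mul_zero]
    · intro j _
      rw [sum_eq_zero, mul_zero]
      intro r _
      rw [cb_neg _ _ (by omega), mul_zero]
  · have hL := (lstar e).2 k t hk
    have eL : (Yp^a * Lp e k t).coeff m.toNat
        = ∑ j ∈ range (t+1), ((e.choose j : ℕ) : ℤ) *
            ∑ r ∈ range (t-j+1), (((e+(t-j-r)).choose (t-j-r) * (k+j-1+r).choose r : ℕ) : ℤ) *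
              Cb ((a:ℤ)+r) (m-j) := by
      rw [Lp, mul_sum, finset_sum_coeff]
      refine sum_congr rfl fun j hj => ?_
      have hpoly : Yp^a * (C ((e.choose j : ℕ):ℤ) * X^j * Qp e (k+j) (t-j))
          = ∑ r ∈ range (t-j+1),
              C (((e.choose j) * ((e+(t-j-r)).choose (t-j-r) * (k+j-1+r).choose r) : ℕ):ℤ)
                * (X^j * Yp^(a+r)) := by
        rw [Qp, mul_sum, mul_sum]
        refine sum_congr rfl fun r _ => ?_
        rw [pow_add]
        simp only [Nat.cast_mul, C_mul]
        ring
      rw [hpoly, finset_sum_coeff, mul_sum]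
      refine sum_congr rfl fun r _ => ?_
      rw [coeff_C_mul, ← cast_ar, cbCoeff (a+r) j m hm, Nat.cast_mul]
      ring
    have eR : (Yp^a * Rp (k+e) t).coeff m.toNat
        = ∑ r ∈ range (t+1), (((k+e-1+r).choose r : ℕ) : ℤ) * Cb ((a:ℤ)+r) m := by
      rw [Rp, mul_sum, finset_sum_coeff]
      refine sum_congr rfl fun r _ => ?_
      have hpoly : Yp^a * (C ((((k+e)-1+r).choose r : ℕ):ℤ) * Yp^r)
          = C ((((k+e)-1+r).choose r : ℕ):ℤ) * Yp^(a+r) := by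
        rw [pow_add]
        ring
      rw [hpoly, coeff_C_mul, ← cast_ar, cbCoeff0 (a+r) m hm]
    rw [← eL, hL, eR]

lemma k0num (t e a : ℕ) (m : ℤ) (hm : 0 ≤ m) :
    ∑ j ∈ range (t+1), ((e.choose (j+1) : ℕ):ℤ) *
      ∑ r ∈ range (t-j+1), (((e+(t-j-r)).choose (t-j-r) * (j+1-1+r).choose r : ℕ):ℤ) *
        Cb ((a:ℤ)+r) (m-((j+1:ℕ):ℤ))
    = Cb (a:ℤ) m + ∑ j ∈ range (t+1), (((e+j).choose (j+1) : ℕ):ℤ) * Cb ((a:ℤ)+((j+1:ℕ):ℤ)) m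
      - ((e+t+1).choose (t+1) : ℤ) * Cb (a:ℤ) m := by
  have hp := p0 e t
  have eL : (Yp^a * (∑ j ∈ range (t+1),
        C ((e.choose (j+1) : ℕ):ℤ) * X^(j+1) * Qp e (j+1) (t-j))).coeff m.toNat
      = ∑ j ∈ range (t+1), ((e.choose (j+1) : ℕ):ℤ) *
          ∑ r ∈ range (t-j+1), (((e+(t-j-r)).choose (t-j-r) * (j+1-1+r).choose r : ℕ):ℤ) *
            Cb ((a:ℤ)+r) (m-((j+1:ℕ):ℤ)) := by
    rw [mul_sum, finset_sum_coeff]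
    refine sum_congr rfl fun j hj => ?_
    have hpoly : Yp^a * (C ((e.choose (j+1) : ℕ):ℤ) * X^(j+1) * Qp e (j+1) (t-j))
        = ∑ r ∈ range (t-j+1),
            C (((e.choose (j+1)) * ((e+(t-j-r)).choose (t-j-r) * (j+1-1+r).choose r) : ℕ):ℤ)
              * (X^(j+1) * Yp^(a+r)) := by
      rw [Qp, mul_sum, mul_sum]
      refine sum_congr rfl fun r _ => ?_
      rw [pow_add]
      simp only [Nat.cast_mul, C_mul]
      ring
    rw [hpoly, finset_sum_coeff, mul_sum]
    refine sum_congr rfl fun r _ => ?_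
    rw [coeff_C_mul, ← cast_ar, cbCoeff (a+r) (j+1) m hm, Nat.cast_mul]
    push_cast
    ring
  have eR : (Yp^a * (1 + ∑ j ∈ range (t+1), C (((e+j).choose (j+1) : ℕ):ℤ) * Yp^(j+1)
        - C (((e+t+1).choose (t+1) : ℕ):ℤ))).coeff m.toNat
      = Cb (a:ℤ) m + ∑ j ∈ range (t+1), (((e+j).choose (j+1) : ℕ):ℤ) * Cb ((a:ℤ)+((j+1:ℕ):ℤ)) m
        - ((e+t+1).choose (t+1) : ℤ) * Cb (a:ℤ) m := by
    rw [mul_sub, mul_add, mul_one, mul_sum, coeff_sub, coeff_add, finset_sum_coeff]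
    have h1 : (Yp^a).coeff m.toNat = Cb (a:ℤ) m := (cbCoeff0 a m hm).symm
    have h2 : ∀ j ∈ range (t+1),
        (Yp^a * (C (((e+j).choose (j+1) : ℕ):ℤ) * Yp^(j+1))).coeff m.toNat
        = (((e+j).choose (j+1) : ℕ):ℤ) * Cb ((a:ℤ)+((j+1:ℕ):ℤ)) m := by
      intro j _
      have hpoly : Yp^a * (C (((e+j).choose (j+1) : ℕ):ℤ) * Yp^(j+1))
          = C (((e+j).choose (j+1) : ℕ):ℤ) * Yp^(a+(j+1)) := by
        rw [pow_add]; ring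
      rw [hpoly, coeff_C_mul, ← cast_ar, cbCoeff0 (a+(j+1)) m hm]
    have h3 : (Yp^a * C (((e+t+1).choose (t+1) : ℕ):ℤ)).coeff m.toNat
        = ((e+t+1).choose (t+1) : ℤ) * Cb (a:ℤ) m := by
      rw [mul_comm, coeff_C_mul, cbCoeff0 a m hm]
    rw [h1, sum_congr rfl h2, h3]
  rw [← eL, hp, eR]

lemma fb_neg : ∀ (t : ℕ) (a : ℤ) (s e : ℕ) (m : ℤ), m < 0 → Fb t a s e m = 0 := by
  intro t a s e m hm
  match t with
  | 0 => rw [Fb]; exact cb_neg _ _ hm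
  | (t+1) => rw [Fb, if_pos hm]

lemma gud : ∀ t : ℕ, ∀ (a e k s : ℕ) (m : ℤ), 1 ≤ k → (s:ℤ) = m + 3 + k + e →
    Fb t (a:ℤ) s e m = ∑ j ∈ range (t+1),
      (((e+(t-j)).choose (t-j) * (k-1+j).choose j : ℕ):ℤ) * Cb ((a:ℤ)+j) m := by
  intro t
  induction t using Nat.strong_induction_on with
  | _ t ih =>
  rcases t with _ | t
  · intro a e k s m hk hs
    rw [Fb, sum_range_one]
    simp
  · intro a e k s m hk hs
    rcases lt_or_ge m 0 with hm | hm
    · rw [fb_neg _ _ _ _ _ hm, eq_comm, sum_eq_zero]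
      intro j _
      rw [cb_neg _ _ (by omega), mul_zero]
    · rw [Fb, if_neg (by omega)]
      have hA : ∀ j ∈ range (t+1),
          Cb ((s:ℤ) - m - 4 + ((j:ℤ)+1)) ((j:ℤ)+1) * Cb ((a:ℤ) + ((j:ℤ)+1)) m
          = (((k+e+j).choose (j+1) : ℕ):ℤ) * Cb ((a:ℤ)+((j+1:ℕ):ℤ)) m := by
        intro j _
        have h1 : (s:ℤ) - m - 4 + ((j:ℤ)+1) = ((k+e+j : ℕ):ℤ) := by push_cast; omega
        have h2 : ((j:ℤ)+1) = ((j+1 : ℕ):ℤ) := by push_cast; ring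
        rw [h1, h2, cb_nat]
      have hB : ∀ j ∈ range (t+1),
          Cb ((e:ℕ):ℤ) ((j:ℤ)+1) * Fb (t-j) (a:ℤ) s e (m - ((j:ℤ)+1))
          = ((e.choose (j+1) : ℕ):ℤ) * ∑ r ∈ range (t-j+1),
              (((e+(t-j-r)).choose (t-j-r) * (k+(j+1)-1+r).choose r : ℕ):ℤ)
                * Cb ((a:ℤ)+r) (m-((j+1:ℕ):ℤ)) := by
        intro j hj
        have hj' : j < t+1 := mem_range.mp hj
        have h2 : ((j:ℤ)+1) = ((j+1 : ℕ):ℤ) := by push_cast; ring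
        rw [h2, cb_nat, ih (t-j) (by omega) a e (k+(j+1)) s (m - ((j+1:ℕ):ℤ)) (by omega)
          (by push_cast at hs ⊢; omega)]
      rw [sum_congr rfl hA, sum_congr rfl hB]
      have hk2 := knum (t+1) e k a m hk
      rw [Finset.sum_range_succ' (fun j => ((e.choose j : ℕ) : ℤ) *
        ∑ r ∈ range (t+1-j+1), (((e+(t+1-j-r)).choose (t+1-j-r) * (k+j-1+r).choose r : ℕ) : ℤ) *
          Cb ((a:ℤ)+r) (m-j)) (t+1)] at hk2
      rw [Finset.sum_range_succ' (fun r => (((k+e-1+r).choose r : ℕ) : ℤ) *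
        Cb ((a:ℤ)+r) m) (t+1)] at hk2
      have hS2 : ∀ j ∈ range (t+1),
          ((e.choose (j+1) : ℕ) : ℤ) *
            ∑ r ∈ range (t+1-(j+1)+1),
              (((e+(t+1-(j+1)-r)).choose (t+1-(j+1)-r) * (k+(j+1)-1+r).choose r : ℕ) : ℤ) *
                Cb ((a:ℤ)+r) (m-((j+1:ℕ):ℤ))
          = ((e.choose (j+1) : ℕ):ℤ) * ∑ r ∈ range (t-j+1),
              (((e+(t-j-r)).choose (t-j-r) * (k+(j+1)-1+r).choose r : ℕ):ℤ)
                * Cb ((a:ℤ)+r) (m-((j+1:ℕ):ℤ)) := by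
        intro j hj
        rw [show t+1-(j+1) = t-j from by omega]
      have hS1 : ∀ r ∈ range (t+1),
          (((k+e-1+(r+1)).choose (r+1) : ℕ) : ℤ) * Cb ((a:ℤ)+((r+1:ℕ):ℤ)) m
          = (((k+e+r).choose (r+1) : ℕ) : ℤ) * Cb ((a:ℤ)+((r+1:ℕ):ℤ)) m := by
        intro r _
        rw [show k+e-1+(r+1) = k+e+r from by omega]
      rw [sum_congr rfl hS2, sum_congr rfl hS1] at hk2
      simp only [Nat.choose_zero_right, Nat.cast_one, one_mul, Nat.sub_zero, Nat.add_zero,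
        Nat.cast_zero, sub_zero, add_zero] at hk2
      linear_combination -hk2

/-- **Closed form at maximal exceeding number (Lemma A.2).**
`F_t(a,s,s−n−3,n) = C(a,n) + Σ_{i=1}^t C(s−n−4+i,i)·C(a,n)` for `s ≥ n+3`. -/
theorem stmt_14 (t a s n : ℕ) (hs : n + 3 ≤ s) :
    Fb t (a : ℤ) s (s - n - 3) (n : ℤ) =
      Cb (a : ℤ) n +
        ∑ j ∈ Finset.range t, Cb ((s : ℤ) - n - 4 + (j + 1)) (j + 1) * Cb (a : ℤ) n := by
  rcases t with _ | t
  · rw [Fb]; simp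
  · rw [Fb, if_neg (by omega : ¬ ((n:ℤ) < 0))]
    have hA : ∀ j ∈ range (t+1),
        Cb ((s:ℤ) - n - 4 + ((j:ℤ)+1)) ((j:ℤ)+1) * Cb ((a:ℤ) + ((j:ℤ)+1)) n
        = ((((s-n-3)+j).choose (j+1) : ℕ):ℤ) * Cb ((a:ℤ)+((j+1:ℕ):ℤ)) n := by
      intro j _
      have h1 : (s:ℤ) - n - 4 + ((j:ℤ)+1) = (((s-n-3)+j : ℕ):ℤ) := by omega
      have h2 : ((j:ℤ)+1) = ((j+1 : ℕ):ℤ) := by push_cast; ring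
      rw [h1, h2, cb_nat]
    have hB : ∀ j ∈ range (t+1),
        Cb ((s-n-3 : ℕ):ℤ) ((j:ℤ)+1) * Fb (t-j) (a:ℤ) s (s-n-3) ((n:ℤ) - ((j:ℤ)+1))
        = (((s-n-3).choose (j+1) : ℕ):ℤ) * ∑ r ∈ range (t-j+1),
            ((((s-n-3)+(t-j-r)).choose (t-j-r) * ((j+1)-1+r).choose r : ℕ):ℤ)
              * Cb ((a:ℤ)+r) ((n:ℤ)-((j+1:ℕ):ℤ)) := by
      intro j hj
      have hj' : j < t+1 := mem_range.mp hj
      have h2 : ((j:ℤ)+1) = ((j+1 : ℕ):ℤ) := by push_cast; ring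
      rw [h2, cb_nat, gud (t-j) a (s-n-3) (j+1) s ((n:ℤ) - ((j+1:ℕ):ℤ)) (by omega) (by omega)]
    have hC : ∀ j ∈ range (t+1),
        Cb ((s:ℤ) - n - 4 + ((j:ℤ)+1)) ((j:ℤ)+1) * Cb (a:ℤ) n
        = ((((s-n-3)+j).choose (j+1) : ℕ):ℤ) * Cb (a:ℤ) n := by
      intro j _
      have h1 : (s:ℤ) - n - 4 + ((j:ℤ)+1) = (((s-n-3)+j : ℕ):ℤ) := by omega
      have h2 : ((j:ℤ)+1) = ((j+1 : ℕ):ℤ) := by push_cast; ring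
      rw [h1, h2, cb_nat]
    rw [sum_congr rfl hA, sum_congr rfl hB, sum_congr rfl hC]
    have hk0 := k0num t (s-n-3) a (n:ℤ) (Int.natCast_nonneg n)
    have hstN : ∀ T : ℕ, ((s-n-3)+T+1).choose (T+1)
        = 1 + ∑ j ∈ range (T+1), ((s-n-3)+j).choose (j+1) := by
      intro T
      induction T with
      | zero =>
        simp [Nat.choose_one_right]
        omega
      | succ T ihT =>
        rw [sum_range_succ, show (s-n-3)+(T+1)+1 = ((s-n-3)+T+1)+1 from by omega,
          Nat.choose_succ_succ, ihT, show (s-n-3)+(T+1) = (s-n-3)+T+1 from by omega]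
        simp only [Nat.succ_eq_add_one]
        omega
    have hstz : ((((s-n-3)+t+1).choose (t+1) : ℕ):ℤ)
        = 1 + ∑ j ∈ range (t+1), ((((s-n-3)+j).choose (j+1) : ℕ):ℤ) := by
      exact_mod_cast congrArg (Nat.cast (R := ℤ)) (hstN t)
    have hsum : ∑ j ∈ range (t+1), (((((s-n-3)+j).choose (j+1) : ℕ):ℤ) * Cb (a:ℤ) n)
        = (∑ j ∈ range (t+1), ((((s-n-3)+j).choose (j+1) : ℕ):ℤ)) * Cb (a:ℤ) n :=
      (sum_mul _ _ _).symm
    linear_combination -hk0 - hsum + Cb (a:ℤ) (n:ℤ) * hstz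

end
end

section
/- For every t, a, s, n ∈ ℕ with t ≥ 1, n ≥ 1 and s ≥ n+3, one has F_t(a, s, 0, n) + F_{t−1}(a, s, 0, n−1) = F_t(a+t, s, s−n−3, n). -/
open Finset

noncomputable section

-- basic facts
example : Ring.choose ((-1 : ℤ)) 0 = 1 := Ring.choose_zero_right _
example (n k : ℕ) : Ring.choose ((n : ℤ)) k = n.choose k := Ring.choose_natCast n k
example (x : ℤ) (k : ℕ) : Ring.choose (x+1) (k+1) = Ring.choose x k + Ring.choose x (k+1) :=
  Ring.choose_succ_succ x k

lemma Cb_natCast (b : ℕ) (m : ℤ) :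
    Cb (b : ℤ) m = if 0 ≤ m then (b.choose m.toNat : ℤ) else 0 := by
  unfold Cb
  split_ifs with h1 h2 h2
  · rfl
  · omega
  · have : (b : ℤ) < m := by omega
    have : b < m.toNat := by omega
    rw [Nat.choose_eq_zero_of_lt this]; simp
  · rfl

lemma Cb_pascal (b : ℕ) (m : ℤ) :
    Cb ((b : ℤ) + 1) m = Cb (b : ℤ) m + Cb (b : ℤ) (m - 1) := by
  have h1 : ((b : ℤ) + 1) = ((b + 1 : ℕ) : ℤ) := by push_cast; ring
  rw [h1, Cb_natCast, Cb_natCast, Cb_natCast]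
  rcases lt_or_ge m 0 with hm | hm
  · rw [if_neg (by omega), if_neg (by omega), if_neg (by omega)]; ring
  · rcases eq_or_lt_of_le hm with hm0 | hm1
    · rw [if_pos hm, if_pos hm, if_neg (by omega), ← hm0]; simp
    · rw [if_pos hm, if_pos hm, if_pos (by omega)]
      have h2 : m.toNat = (m - 1).toNat + 1 := by omega
      rw [h2, Nat.choose_succ_succ']
      push_cast; ring

lemma Cb_vandermonde (b i : ℕ) (m : ℤ) :
    Cb ((b : ℤ) + i) m = ∑ k ∈ range (i + 1), (i.choose k : ℤ) * Cb (b : ℤ) (m - k) := by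
  induction i generalizing m with
  | zero => simp
  | succ i ih =>
    have h1 : ((b : ℤ) + (i + 1 : ℕ)) = ((b + i : ℕ) : ℤ) + 1 := by push_cast; ring
    rw [h1, Cb_pascal (b + i) m]
    push_cast
    rw [ih m, ih (m - 1)]
    rw [sum_range_succ' (fun k => ((i+1).choose k : ℤ) * Cb (b : ℤ) (m - k)) (i+1)]
    have hsplit : ∀ k ∈ range (i+1),
        (((i+1).choose (k+1) : ℕ) : ℤ) * Cb (b : ℤ) (m - (k+1 : ℕ)) =
        (i.choose k : ℤ) * Cb (b : ℤ) ((m-1) - k)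
          + (i.choose (k+1) : ℤ) * Cb (b : ℤ) (m - (k+1 : ℕ)) := by
      intro k _
      rw [Nat.choose_succ_succ]
      have : m - ((k : ℤ) + 1) = (m - 1) - k := by ring
      push_cast
      rw [this]; ring
    rw [sum_congr rfl hsplit, sum_add_distrib]
    have h2 : ∑ k ∈ range (i+1), (i.choose (k+1) : ℤ) * Cb (b : ℤ) (m - (k+1 : ℕ))
        + ((i+1).choose 0 : ℤ) * Cb (b : ℤ) (m - (0:ℕ)) =
        ∑ k ∈ range (i+2), (i.choose k : ℤ) * Cb (b : ℤ) (m - k) := by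
      rw [sum_range_succ' (fun k => (i.choose k : ℤ) * Cb (b : ℤ) (m - k)) (i+1)]
      norm_num
    have h3 : ∑ k ∈ range (i+2), (i.choose k : ℤ) * Cb (b : ℤ) (m - k)
        = ∑ k ∈ range (i+1), (i.choose k : ℤ) * Cb (b : ℤ) (m - k) := by
      rw [sum_range_succ, Nat.choose_succ_self]
      norm_num
    push_cast at h2 ⊢
    rw [add_assoc, add_comm]
    rw [h2, h3]

/-- Vandermonde for generalized binomial with one natural argument. -/
lemma RC_vandermonde (e : ℕ) : ∀ (k : ℕ) (x : ℤ),
    ∑ i ∈ range (k + 1), (e.choose i : ℤ) * Ring.choose x (k - i) = Ring.choose (x + e) k := by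
  induction e with
  | zero =>
    intro k x
    rw [sum_eq_single 0 (by intro i _ hi; rw [Nat.choose_eq_zero_of_lt (by omega)]; simp)
      (by intro h; simp at h)]
    simp
  | succ e ih =>
    intro k x
    match k with
    | 0 => simp
    | k +
      1 =>
      rw [sum_range_succ' _ (k+1)]
      have hsplit : ∀ i ∈ range (k+1),
          ((e+1).choose (i+1) : ℤ) * Ring.choose x (k + 1 - (i+1)) =
          (e.choose i : ℤ) * Ring.choose x (k - i)
            + (e.choose (i+1) : ℤ) * Ring.choose x (k + 1 - (i+1)) := by
        intro i _
        rw [Nat.choose_succ_succ]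
        have : k + 1 - (i + 1) = k - i := by omega
        rw [this]
        push_cast; ring
      rw [sum_congr rfl hsplit, sum_add_distrib]
      have h2 : ∑ i ∈ range (k+1), (e.choose (i+1) : ℤ) * Ring.choose x (k + 1 - (i+1))
          + ((e+1).choose 0 : ℤ) * Ring.choose x (k + 1 - 0) =
          ∑ i ∈ range (k+2), (e.choose i : ℤ) * Ring.choose x (k + 1 - i) := by
        rw [sum_range_succ' (fun i => (e.choose i : ℤ) * Ring.choose x (k + 1 - i)) (k+1)]
        norm_num
      rw [add_assoc, h2, ih (k+1) x, ih k x]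
      have : x + ((e : ℤ) + 1) = (x + e) + 1 := by ring
      push_cast [this]
      rw [Ring.choose_succ_succ]

/-- Trinomial revision, total version. -/
lemma T1 (n k r : ℕ) :
    n.choose (k + r) * (k + r).choose k = n.choose r * (n - r).choose k := by
  rcases le_or_gt (k + r) n with h | h
  · have hrs : (k+r).choose k = (k+r).choose r := by
      rw [← Nat.choose_symm (Nat.le_add_right k r)]
      congr 1; omega
    rw [hrs, Nat.choose_mul (Nat.le_add_left r k)]
    congr 2
    omega
  · rw [Nat.choose_eq_zero_of_lt h]
    rcases le_or_gt r n with h2 | h2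
    · rw [Nat.choose_eq_zero_of_lt (show n - r < k by omega), mul_comm]; simp
    · rw [Nat.choose_eq_zero_of_lt h2]; simp

/-- coefficient `gd d i = C(d+i-1, i)` (with ℕ-subtraction so `gd 0 0 = 1`). -/
def gd (d i : ℕ) : ℕ := (d + i - 1).choose i

lemma gd_bridge (d k : ℕ) : (gd d k : ℤ) = Ring.choose ((d : ℤ) + k - 1) k := by
  unfold gd
  rcases Nat.eq_zero_or_pos (d + k) with h | h
  · have hd : d = 0 := by omega
    have hk : k = 0 := by omega
    subst hd; subst hk
    simpa using (Ring.choose_zero_right (R := ℤ) (-1)).symm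
  · have : (d : ℤ) + k - 1 = ((d + k - 1 : ℕ) : ℤ) := by omega
    rw [this, Ring.choose_natCast]

/-- Hockey-stick-with-trinomial: key coefficient identity. -/
lemma hockey3 (d k : ℕ) : ∀ R : ℕ,
    ∑ i ∈ range (k + R + 1), gd d i * i.choose k = (k + R + d).choose R * gd d k := by
  intro R
  induction R with
  | zero =>
    rw [sum_range_succ, sum_eq_zero (by
      intro i hi
      rw [Nat.choose_eq_zero_of_lt (mem_range.mp hi)]
      simp)]
    simp [Nat.choose_self]
  | succ R ih =>
    have hr : k + (R+1) + 1 = (k + R + 1) + 1 := by omega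
    rw [hr, sum_range_succ, ih]
    have hT1 : gd d (k + R + 1) * (k + R + 1).choose k
        = (d + k + R).choose (R+1) * gd d k := by
      have h0 : gd d (k + R + 1) = (d + k + R).choose (k + (R+1)) := by
        unfold gd; congr 1 <;> omega
      have h1 : (d + k + R) - (R + 1) = d + k - 1 := by omega
      have := T1 (d + k + R) k (R + 1)
      rw [h1] at this
      rw [h0]
      have h2 : (k + R + 1).choose k = (k + (R+1)).choose k := rfl
      rw [h2, this]
      rfl
    rw [hT1, ← add_mul]
    congr 1
    have h3 : k + R + d = d + k + R := by omega
    have h4 : k + (R+1) + d = d + k + R + 1 := by omega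
    rw [h3, h4, Nat.choose_succ_succ]

lemma Cb_nat (a k : ℕ) : Cb (a : ℤ) (k : ℤ) = (a.choose k : ℤ) := by
  rw [Cb_natCast, if_pos (by positivity)]
  simp

lemma hockey3' (d k T : ℕ) (hk : k ≤ T) :
    ∑ i ∈ range (T+1), gd d i * i.choose k = (T+d).choose (d+k) * gd d k := by
  have h := hockey3 d k (T - k)
  have h1 : k + (T - k) + 1 = T + 1 := by omega
  have h2 : k + (T - k) + d = T + d := by omega
  rw [h1, h2] at h
  rw [h]
  have h3 : d + k = (T + d) - (T - k) := by omega
  rw [h3, Nat.choose_symm (by omega)]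

lemma Fb_succ (t : ℕ) (a : ℤ) (s e : ℕ) (n : ℤ) :
    Fb (t+1) a s e n =
      if n < 0 then 0 else
      Cb a n
        + ∑ j ∈ Finset.range (t+1), Cb ((s : ℤ) - n - 4 + (j+1)) (j+1) * Cb (a + (j+1)) n
        - ∑ j ∈ Finset.range (t+1), Cb (e : ℤ) (j+1) * Fb (t - j) a s e (n - (j+1)) := by
  rw [Fb]

lemma closedForm : ∀ (t : ℕ), ∀ (e b s : ℕ) (m : ℤ) (d : ℕ), (s : ℤ) = m + 3 + d →
    Fb t (b : ℤ) s e m =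
      ∑ j ∈ range (t+1), ((t+d).choose (d+j) : ℤ) *
        Ring.choose ((d : ℤ) - e + j - 1) j * Cb (b : ℤ) (m - j) := by
  intro t
  induction t using Nat.strong_induction_on with
  | _ t IH =>
  intro e b s m d hs
  match t with
  | 0 =>
    show Fb 0 (b:ℤ) s e m = _
    rw [show Fb 0 (b:ℤ) s e m = Cb (b:ℤ) m from by rw [Fb], sum_range_one]
    simp [Ring.choose_zero_right, Nat.choose_self]
  | T+1 =>
    rw [Fb_succ]
    rcases lt_or_ge m 0 with hm | hm
    · rw [if_pos hm]
      symm
      refine sum_eq_zero fun j _ => ?_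
      have hz : Cb (b:ℤ) (m - j) = 0 := by
        unfold Cb
        rw [if_neg (by omega)]
      rw [hz, mul_zero]
    rw [if_neg (by omega)]
    -- Step A : the positive part
    have hA : Cb (b:ℤ) m
        + ∑ j ∈ range (T+1), Cb ((s:ℤ) - m - 4 + (j+1)) (j+1) * Cb ((b:ℤ) + (j+1)) m
        = ∑ k ∈ range (T+2), (((T+1+d).choose (d+k) * gd d k : ℕ) : ℤ) * Cb (b:ℤ) (m - k) := by
      have hA0 : Cb (b:ℤ) m
          + ∑ j ∈ range (T+1), Cb ((s:ℤ) - m - 4 + (j+1)) (j+1) * Cb ((b:ℤ) + (j+1)) m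
          = ∑ i ∈ range (T+2), (gd d i : ℤ) * Cb ((b:ℤ) + (i:ℕ)) m := by
        rw [sum_range_succ' (fun i => (gd d i : ℤ) * Cb ((b:ℤ) + (i:ℕ)) m) (T+1)]
        rw [add_comm]
        congr 1
        · refine sum_congr rfl fun j _ => ?_
          have h2 : (s:ℤ) - m - 4 + ((j:ℤ)+1) = ((d + j : ℕ) : ℤ) := by push_cast; omega
          have h3 : ((j:ℤ)+1) = ((j+1 : ℕ) : ℤ) := by push_cast; ring
          have h4 : gd d (j+1) = (d + j).choose (j+1) := by
            unfold gd; congr 1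
          rw [h2, h3, Cb_nat, h4]
        · have : gd d 0 = 1 := by unfold gd; simp
          simp [this]
      rw [hA0]
      have hA1 : ∀ i ∈ range (T+2), (gd d i : ℤ) * Cb ((b:ℤ) + (i:ℕ)) m
          = ∑ k ∈ range (T+2), (gd d i : ℤ) * ((i.choose k : ℤ) * Cb (b:ℤ) (m - k)) := by
        intro i hi
        rw [Cb_vandermonde b i m, mul_sum]
        apply Finset.sum_subset
        · exact Finset.range_subset_range.mpr (by simp at hi; omega)
        · intro k _ hk
          simp only [mem_range, not_lt] at hk
          rw [Nat.choose_eq_zero_of_lt (by omega)]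
          simp
      rw [sum_congr rfl hA1, sum_comm]
      refine sum_congr rfl fun k hk => ?_
      have : ∀ i ∈ range (T+2), (gd d i : ℤ) * ((i.choose k : ℤ) * Cb (b:ℤ) (m - k))
          = ((gd d i * i.choose k : ℕ) : ℤ) * Cb (b:ℤ) (m - k) := by
        intro i _; push_cast; ring
      rw [sum_congr rfl this, ← sum_mul, ← Nat.cast_sum]
      rw [hockey3' d k (T+1) (by simp at hk; omega)]
    rw [hA]
    -- Step B : the recursive part
    set g : ℕ → ℕ → ℤ := fun j r =>
      (e.choose (j+1) : ℤ) * ((T+1+d).choose (d+(j+1)+r) : ℤ) *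
        Ring.choose ((d:ℤ) - e + ((j:ℤ)+1+r) - 1) r * Cb (b:ℤ) (m - ((j:ℤ)+1+r)) with hg
    have hB1 : ∀ j ∈ range (T+1),
        Cb (e:ℤ) ((j:ℤ)+1) * Fb (T-j) (b:ℤ) s e (m - ((j:ℤ)+1))
        = ∑ r ∈ range (T+1-j), g j r := by
      intro j hj
      have hj' : j ≤ T := by simp at hj; omega
      have hs' : (s:ℤ) = (m - ((j:ℤ)+1)) + 3 + ((d+j+1 : ℕ) : ℤ) := by push_cast; omega
      rw [IH (T-j) (by omega) e b s (m - ((j:ℤ)+1)) (d+j+1) hs']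
      have hce : Cb (e:ℤ) ((j:ℤ)+1) = (e.choose (j+1) : ℤ) := by
        rw [show ((j:ℤ)+1) = ((j+1 : ℕ) : ℤ) from by push_cast; ring, Cb_nat]
      rw [hce, mul_sum]
      have hrange : T - j + 1 = T + 1 - j := by omega
      rw [hrange]
      refine sum_congr rfl fun r _ => ?_
      simp only [hg]
      have c1 : T - j + (d+j+1) = T+1+d := by omega
      have c2 : d+j+1+r = d+(j+1)+r := by omega
      have c3 : ((d+j+1 : ℕ) : ℤ) - e + r - 1 = (d:ℤ) - e + ((j:ℤ)+1+r) - 1 := by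
        push_cast; ring
      have c4 : m - ((j:ℤ)+1) - r = m - ((j:ℤ)+1+r) := by ring
      rw [c1, c2, c3, c4]
      ring
    rw [sum_congr rfl hB1, ← Finset.sum_range_diag_flip (T+1) g]
    have hB2 : ∀ c ∈ range (T+1),
        ∑ i ∈ range (c+1), g i (c - i)
        = ((T+1+d).choose (d+c+1) : ℤ) *
            ((gd d (c+1) : ℤ) - Ring.choose ((d:ℤ) - e + c) (c+1)) *
            Cb (b:ℤ) (m - ((c:ℤ)+1)) := by
      intro c _
      have hterm : ∀ i ∈ range (c+1), g i (c - i)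
          = (e.choose (i+1) : ℤ) *
              Ring.choose ((d:ℤ) - e + c) ((c+1) - (i+1)) *
              (((T+1+d).choose (d+c+1) : ℤ) * Cb (b:ℤ) (m - ((c:ℤ)+1))) := by
        intro i hi
        have hi' : i ≤ c := by simp at hi; omega
        simp only [hg]
        have c1 : d+(i+1)+(c-i) = d+c+1 := by omega
        have c2 : ((i:ℤ)+1+((c-i : ℕ) : ℤ)) = (c:ℤ)+1 := by
          have : ((c-i : ℕ) : ℤ) = (c:ℤ) - i := by omega
          rw [this]; ring
        have c3 : (c+1) - (i+1) = c - i := by omega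
        rw [c1, c2, c3]
        have c4 : (d:ℤ) - e + ((c:ℤ)+1) - 1 = (d:ℤ) - e + c := by ring
        rw [c4]
        ring
      rw [sum_congr rfl hterm, ← sum_mul]
      have hvdm := RC_vandermonde e (c+1) ((d:ℤ) - e + c)
      rw [sum_range_succ' (fun i => (e.choose i : ℤ) *
        Ring.choose ((d:ℤ) - e + c) ((c+1) - i)) (c+1)] at hvdm
      have hx : (d:ℤ) - e + c + e = (d:ℤ) + ((c+1 : ℕ) : ℤ) - 1 := by push_cast; ring
      rw [hx, ← gd_bridge d (c+1)] at hvdm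
      simp only [Nat.choose_zero_right, Nat.cast_one, one_mul, Nat.sub_zero] at hvdm
      have hsum : ∑ i ∈ range (c+1), (e.choose (i+1) : ℤ) *
          Ring.choose ((d:ℤ) - e + c) ((c+1) - (i+1))
          = (gd d (c+1) : ℤ) - Ring.choose ((d:ℤ) - e + c) (c+1) := by
        linarith [hvdm]
      rw [hsum]
      ring
    rw [sum_congr rfl hB2, sub_eq_iff_eq_add]
    rw [sum_range_succ' (fun k => (((T+1+d).choose (d+k) * gd d k : ℕ) : ℤ)
      * Cb (b:ℤ) (m - k)) (T+1)]
    rw [sum_range_succ' (fun j => (((T+1)+d).choose (d+j) : ℤ) *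
      Ring.choose ((d:ℤ) - e + j - 1) j * Cb (b:ℤ) (m - j)) (T+1)]
    conv_rhs => rw [add_right_comm]
    rw [← sum_add_distrib]
    congr 1
    · refine sum_congr rfl fun c _ => ?_
      have r3 : d+(c+1) = d+c+1 := by omega
      have r2 : (d:ℤ) - e + ((c+1 : ℕ) : ℤ) - 1 = (d:ℤ) - e + c := by push_cast; ring
      rw [r3, r2]
      have r4 : m - ((c+1 : ℕ) : ℤ) = m - ((c:ℤ)+1) := by push_cast; ring
      rw [r4]
      push_cast
      ring
    · have g0 : gd d 0 = 1 := by unfold gd; simp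
      simp [g0, Ring.choose_zero_right]

/-- **Property 2.** `F_t(a,s,0,n) + F_{t−1}(a,s,0,n−1) = F_t(a+t,s,s−n−3,n)`
for `t ≥ 1`, `n ≥ 1` and `s ≥ n+3`. -/
theorem stmt_15 (t a s n : ℕ) (ht : 1 ≤ t) (hn : 1 ≤ n) (hs : n + 3 ≤ s) :
    Fb t (a : ℤ) s 0 (n : ℤ) + Fb (t - 1) (a : ℤ) s 0 ((n : ℤ) - 1) =
      Fb t ((a : ℤ) + t) s (s - n - 3) (n : ℤ) := by
  set d := s - n - 3 with hdd
  have hd : (s:ℤ) = (n:ℤ) + 3 + d := by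
    have : d = s - n - 3 := hdd
    omega
  obtain ⟨T, rfl⟩ : ∃ T, t = T + 1 := ⟨t - 1, by omega⟩
  have ht1 : T + 1 - 1 = T := by omega
  rw [ht1]
  have hd2 : (s:ℤ) = ((n:ℤ) - 1) + 3 + ((d+1 : ℕ) : ℤ) := by push_cast; omega
  have hcast : (a:ℤ) + ((T+1 : ℕ) : ℤ) = ((a + (T+1) : ℕ) : ℤ) := by push_cast; ring
  rw [hcast]
  rw [closedForm (T+1) 0 a s n d hd, closedForm T 0 a s ((n:ℤ)-1) (d+1) hd2,
      closedForm (T+1) d (a+(T+1)) s n d hd]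
  -- collapse the RHS
  have hR : ∑ j ∈ range (T+1+1), (((T+1)+d).choose (d+j) : ℤ) *
        Ring.choose ((d:ℤ) - d + j - 1) j * Cb ((a + (T+1) : ℕ) : ℤ) ((n:ℤ) - j)
      = ∑ k ∈ range (T+2), (((T+1+d).choose d * (T+1).choose k : ℕ) : ℤ) *
          Cb (a : ℤ) ((n:ℤ) - k) := by
    rw [Finset.sum_eq_single_of_mem 0 (by simp) (by
      intro j _ hj
      have hj1 : 1 ≤ j := Nat.one_le_iff_ne_zero.mpr hj
      have h1 : (d:ℤ) - d + j - 1 = ((j - 1 : ℕ) : ℤ) := by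
        rw [Nat.cast_sub hj1]; push_cast; ring
      rw [h1, Ring.choose_natCast, Nat.choose_eq_zero_of_lt (Nat.sub_lt (by omega) (by omega))]
      push_cast
      ring)]
    have h2 : ((a + (T+1) : ℕ) : ℤ) = (a:ℤ) + ((T+1 : ℕ) : ℤ) := by push_cast; ring
    have h3 : (n:ℤ) - ((0:ℕ):ℤ) = (n:ℤ) := by push_cast; ring
    rw [h2, h3, Cb_vandermonde a (T+1) (n:ℤ), mul_sum]
    refine sum_congr rfl fun k _ => ?_
    simp only [Nat.add_zero, Ring.choose_zero_right]
    push_cast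
    ring
  rw [hR]
  rw [sum_range_succ' (fun j => (((T+1)+d).choose (d+j) : ℤ) *
      Ring.choose ((d:ℤ) - ((0:ℕ):ℤ) + j - 1) j * Cb (a : ℤ) ((n:ℤ) - j)) (T+1)]
  rw [sum_range_succ' (fun k => (((T+1+d).choose d * (T+1).choose k : ℕ) : ℤ) *
      Cb (a : ℤ) ((n:ℤ) - k)) (T+1)]
  conv_lhs => rw [add_right_comm]
  rw [← sum_add_distrib]
  congr 1
  · refine sum_congr rfl fun c hc => ?_
    have hcT : c ≤ T := by simp at hc; omega
    have r1 : (d:ℤ) - ((0:ℕ):ℤ) + ((c+1 : ℕ) : ℤ) - 1 = (d:ℤ) + c := by push_cast; ring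
    have r2 : ((d+1 : ℕ) : ℤ) - ((0:ℕ):ℤ) + (c : ℤ) - 1 = (d:ℤ) + c := by push_cast; ring
    have r3 : ((n:ℤ) - 1) - c = (n:ℤ) - ((c+1 : ℕ) : ℤ) := by push_cast; ring
    have r4 : T + (d+1) = (T+1) + d := by omega
    have r5 : (d+1) + c = d + (c+1) := by omega
    rw [r1, r2, r3, r4, r5]
    have hpas : Ring.choose ((d:ℤ) + c) (c+1) + Ring.choose ((d:ℤ) + c) c
        = ((d+c+1).choose (c+1) : ℤ) := by
      have h6 : ((d+c+1 : ℕ) : ℤ) = ((d:ℤ) + c) + 1 := by push_cast; ring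
      rw [← Ring.choose_natCast (d+c+1) (c+1), h6, Ring.choose_succ_succ]
      ring
    have hT2 : ((T+1)+d).choose (d+(c+1)) * (d+c+1).choose (c+1)
        = (T+1+d).choose d * (T+1).choose (c+1) := by
      have h7 := T1 ((T+1)+d) (c+1) (T-c)
      have h8 : (c+1) + (T-c) = T+1 := by omega
      have h9 : ((T+1)+d) - (T-c) = d+(c+1) := by omega
      rw [h8, h9] at h7
      have h11 : ((T+1)+d).choose (T+1) = ((T+1)+d).choose d := by
        rw [← Nat.choose_symm (show d ≤ (T+1)+d from le_add_self)]
        congr 1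
        omega
      have h12 : ((T+1)+d).choose (T-c) = ((T+1)+d).choose (d+(c+1)) := by
        rw [← Nat.choose_symm (show T-c ≤ (T+1)+d by omega)]
        congr 1
      rw [h12] at h7
      rw [← h11]
      exact h7.symm
    have key : (((T+1)+d).choose (d+(c+1)) : ℤ) * ((d+c+1).choose (c+1) : ℤ)
        = ((T+1+d).choose d : ℤ) * ((T+1).choose (c+1) : ℤ) := by exact_mod_cast hT2
    push_cast
    linear_combination ((((T+1)+d).choose (d+(c+1)) : ℤ) * Cb (a:ℤ) ((n:ℤ) - ((c:ℤ)+1))) * hpas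
      + Cb (a:ℤ) ((n:ℤ) - ((c:ℤ)+1)) * key
  · simp only [Nat.add_zero, Ring.choose_zero_right, Nat.choose_zero_right, Nat.mul_one]
    push_cast
    ring


end
end

section
/- For every t, a, s, ε, n ∈ ℕ with t ≥ 1, n ≥ 1 and ε ≥ 1, one has F_t(a, s, ε, n) + F_{t−1}(a, s, ε, n−1) = F_t(a, s, ε−1, n). -/
open Finset

noncomputable section

lemma Cb_neg (a n : ℤ) (h : n < 0) : Cb a n = 0 := by
  simp only [Cb]; rw [if_neg (by omega)]

lemma Fb_neg (t : ℕ) (a : ℤ) (s e : ℕ) (n : ℤ) (h : n < 0) : Fb t a s e n = 0 := by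
  cases t with
  | zero => rw [Fb.eq_1]; exact Cb_neg a n h
  | succ t => rw [Fb.eq_2, if_pos h]

lemma Cb_natCast_s17 (a k : ℕ) : Cb (a : ℤ) (k : ℤ) = (Nat.choose a k : ℤ) := by
  simp only [Cb]
  split_ifs with h
  · simp
  · have : a < k := by omega
    rw [Nat.choose_eq_zero_of_lt this]; simp

lemma Cb_pascal_s17 (e k : ℕ) (he : 1 ≤ e) :
    Cb (e : ℤ) ((k : ℤ) + 1) = Cb ((e - 1 : ℕ) : ℤ) ((k : ℤ) + 1) + Cb ((e - 1 : ℕ) : ℤ) (k : ℤ) := by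
  have h1 : ((k : ℤ) + 1) = ((k + 1 : ℕ) : ℤ) := by push_cast; ring
  rw [h1, Cb_natCast_s17, Cb_natCast_s17, Cb_natCast_s17]
  have h2 : e = (e - 1) + 1 := by omega
  rw [h2, Nat.choose_succ_succ (e-1) k]
  push_cast; ring

lemma key : ∀ t : ℕ, ∀ (a : ℤ) (s e : ℕ), 1 ≤ e → ∀ n : ℤ,
    Fb (t+1) a s e n + Fb t a s e (n-1) = Fb (t+1) a s (e-1) n := by
  intro t
  induction t using Nat.strong_induction_on with
  | _ t IH =>
  intro a s e he n
  by_cases hn : n < 0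
  · rw [Fb_neg _ _ _ _ _ hn, Fb_neg _ _ _ _ _ (by omega), Fb_neg _ _ _ _ _ hn]; ring
  rw [Fb.eq_2, Fb.eq_2, if_neg hn, if_neg hn]
  have hsum : ∑ j ∈ range (t+1), Cb (↑e) (↑j+1) * Fb (t-j) a s e (n-(↑j+1))
      - ∑ j ∈ range (t+1), Cb (↑(e-1)) (↑j+1) * Fb (t-j) a s (e-1) (n-(↑j+1))
      = Fb t a s e (n-1) := by
    set g : ℕ → ℤ := fun j => if j ≤ t then Cb (↑(e-1)) ↑j * Fb (t-j) a s e (n-1-j) else 0 with hg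
    rw [← Finset.sum_sub_distrib]
    have hterm : ∀ j ∈ range (t+1), Cb (↑e) (↑j+1) * Fb (t-j) a s e (n-(↑j+1))
        - Cb (↑(e-1)) (↑j+1) * Fb (t-j) a s (e-1) (n-(↑j+1)) = g j - g (j+1) := by
      intro j hj
      rw [mem_range] at hj
      rcases eq_or_lt_of_le (Nat.lt_succ_iff.mp hj) with hjt | hjt
      · subst hjt
        have hg1 : g j = Cb (↑(e-1)) ↑j * Fb 0 a s e (n-1-j) := by
          rw [hg]; simp
        have hg2 : g (j+1) = 0 := by rw [hg]; simp
        rw [hg1, hg2, Nat.sub_self]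
        have harg : n - (↑j+1) = n - 1 - (j:ℤ) := by ring
        simp only [Fb.eq_1]
        rw [harg, Cb_pascal_s17 e j he]
        ring
      · have h1 : t - j = (t - j - 1) + 1 := by omega
        have hIH := IH (t - j - 1) (by omega) a s e he (n - (↑j+1))
        rw [← h1] at hIH
        have hg1 : g j = Cb (↑(e-1)) ↑j * Fb (t-j) a s e (n-1-j) := by
          rw [hg]; simp [Nat.le_of_lt hjt]
        have hg2 : g (j+1) = Cb (↑(e-1)) ↑(j+1) * Fb (t-j-1) a s e (n-1-(↑(j+1))) := by
          rw [hg]; simp only [if_pos (by omega : j + 1 ≤ t)]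
          rw [show t - (j+1) = t - j - 1 from by omega]
        have a1 : n - 1 - (j:ℤ) = n - (↑j+1) := by ring
        have a2 : n - 1 - ((↑(j+1)):ℤ) = n - (↑j+1) - 1 := by push_cast; ring
        have a3 : ((↑(j+1)):ℤ) = (j:ℤ) + 1 := by push_cast; ring
        rw [hg1, hg2, a1, a2, a3, ← hIH, Cb_pascal_s17 e j he]
        ring
    rw [Finset.sum_congr rfl hterm, Finset.sum_range_sub' g]
    have hg0 : g 0 = Fb t a s e (n-1) := by
      rw [hg]; simp only [if_pos (Nat.zero_le t), Nat.sub_zero]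
      have h0 : Cb (↑(e-1)) (0:ℤ) = 1 := by
        simp only [Cb]; rw [if_pos ⟨le_refl 0, by positivity⟩]; simp
      simp only [Nat.cast_zero, sub_zero]
      rw [h0, one_mul]
    have hgt : g (t+1) = 0 := by rw [hg]; simp
    rw [hg0, hgt]; ring
  linarith [hsum]

/-- **Property 4.** `F_t(a,s,ε,n) + F_{t−1}(a,s,ε,n−1) = F_t(a,s,ε−1,n)`
for `t ≥ 1`, `n ≥ 1` and `ε ≥ 1`. -/
theorem stmt_17 (t a s ε n : ℕ) (ht : 1 ≤ t) (hn : 1 ≤ n) (hε : 1 ≤ ε) :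
    Fb t (a : ℤ) s ε (n : ℤ) + Fb (t - 1) (a : ℤ) s ε ((n : ℤ) - 1) =
      Fb t (a : ℤ) s (ε - 1) (n : ℤ) := by
  obtain ⟨t', rfl⟩ : ∃ t', t = t'+1 := ⟨t-1, by omega⟩
  simpa using key t' (a : ℤ) s ε hε (n : ℤ)

end
end
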